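/- arXiv:1407.8336 — 2 statements merged into one kernel-verified Lean document; each statement's English description precedes it below -/
import Mathlib

section
/- If G is a minimum counterexample, then no two distinct vertices of degree 1 in G have a common neighbor. -/
open SimpleGraph

universe u

/-- The graph obtained from a 5-cycle by blowing up each vertex into an
independent set of size 2: parts indexed by `ZMod 5`, consecutive parts
completely joined. -/
def C5Sq : SimpleGraph (ZMod 5 × Fin 2) :=
  SimpleGraph.fromRel (fun a b => a.1 = b.1 + 1)

/-- `M` is an induced matching of `G`: a set of edges of `G` such that no two
edges of `M` share an endpoint and no edge of `G` joins endpoints of two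
distinct edges of `M`. -/
def IsInducedMatching {V : Type*} (G : SimpleGraph V) (M : Finset (Sym2 V)) : Prop :=
  (M : Set (Sym2 V)) ⊆ G.edgeSet ∧
    ∀ e ∈ M, ∀ f ∈ M, e ≠ f → ∀ a ∈ e, ∀ b ∈ f, a ≠ b ∧ ¬ G.Adj a b

/-- The strong (induced) matching number of `G`. -/
noncomputable def strongMatchingNumber {V : Type*} (G : SimpleGraph V) : ℕ :=
  sSup {k | ∃ M : Finset (Sym2 V), IsInducedMatching G M ∧ M.card = k}

/-- The degree of a vertex. -/
noncomputable def deg {V : Type*} (G : SimpleGraph V) (v : V) : ℕ :=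
  (G.neighborSet v).ncard

/-- The number of isolated vertices of `G`. -/
noncomputable def numIsolated {V : Type*} (G : SimpleGraph V) : ℕ :=
  {v : V | ∀ w, ¬ G.Adj v w}.ncard

/-- The number of connected components of `G` isomorphic to `C5Sq`. -/
noncomputable def numC5SqComponents {V : Type*} (G : SimpleGraph V) : ℕ :=
  {c : G.ConnectedComponent | Nonempty (G.induce c.supp ≃g C5Sq)}.ncard

/-- `G` is a minimum counterexample: connected, maximum degree at most 4,
no isolated vertices, not isomorphic to `C5Sq`, with `9·ν_s(G) < n(G)`,
while every graph of smaller order and maximum degree at most 4 satisfies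
`9·ν_s(H) ≥ n(H) − i(H) − n₅(H)`. -/
def MinCounterexample {V : Type u} [Fintype V] (G : SimpleGraph V) : Prop :=
  G.Connected ∧ (∀ v, deg G v ≤ 4) ∧ (∀ v, ∃ w, G.Adj v w) ∧
    IsEmpty (G ≃g C5Sq) ∧
    9 * strongMatchingNumber G < Fintype.card V ∧
    ∀ (W : Type u) [Fintype W] (H : SimpleGraph W),
      Fintype.card W < Fintype.card V → (∀ w, deg H w ≤ 4) →
      (Fintype.card W : ℤ) - numIsolated H - numC5SqComponents H ≤
        9 * strongMatchingNumber H

section AuxC5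
instance : DecidableRel C5Sq.Adj := fun a b =>
  decidable_of_iff (a ≠ b ∧ (a.1 = b.1 + 1 ∨ b.1 = a.1 + 1))
    (by rw [C5Sq, SimpleGraph.fromRel_adj])

lemma deg_C5Sq (a : ZMod 5 × Fin 2) : deg C5Sq a = 4 := by
  rw [deg, Set.ncard_eq_toFinset_card']
  revert a; decide

lemma deg_iso {A B : Type*} {G₁ : SimpleGraph A} {G₂ : SimpleGraph B}
    (φ : G₁ ≃g G₂) (x : A) : deg G₁ x = deg G₂ (φ x) := by
  rw [deg, deg, ← Nat.card_coe_set_eq, ← Nat.card_coe_set_eq]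
  exact Nat.card_congr (φ.mapNeighborSet x)

lemma neighborSet_induce_image {V : Type*} (G : SimpleGraph V) (s : Set V) (x : ↥s) :
    Subtype.val '' ((G.induce s).neighborSet x) = s ∩ G.neighborSet ↑x := by
  ext q
  constructor
  · rintro ⟨y, hy, rfl⟩
    exact ⟨y.2, hy⟩
  · rintro ⟨hq, hadj⟩
    exact ⟨⟨q, hq⟩, hadj, rfl⟩

lemma deg_induce {V : Type*} (G : SimpleGraph V) (s : Set V) (x : ↥s) :
    deg (G.induce s) x = (s ∩ G.neighborSet ↑x).ncard := by
  rw [deg, ← neighborSet_induce_image, Set.ncard_image_of_injective _ Subtype.val_injective]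

lemma deg_induce_le {V : Type*} [Finite V] (G : SimpleGraph V) (s : Set V) (x : ↥s) :
    deg (G.induce s) x ≤ deg G ↑x := by
  rw [deg_induce]
  exact Set.ncard_le_ncard Set.inter_subset_right (Set.toFinite _)

lemma neighborSet_subset_of_deg_induce_eq {V : Type*} [Finite V] (G : SimpleGraph V)
    (s : Set V) (x : ↥s) (h : deg G ↑x ≤ deg (G.induce s) x) :
    G.neighborSet ↑x ⊆ s := by
  rw [deg_induce, deg] at h
  have := Set.eq_of_subset_of_ncard_le (Set.inter_subset_right (s := s)) h (Set.toFinite _)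
  rw [← this]
  exact Set.inter_subset_left

lemma numIsolated_induce_zero {V : Type*} [Finite V] (G : SimpleGraph V) (T : Set V)
    (h : ∀ w ∉ T, ∃ q, q ∉ T ∧ G.Adj w q) : numIsolated (G.induce Tᶜ) = 0 := by
  rw [numIsolated, Set.ncard_eq_zero (Set.toFinite _), Set.eq_empty_iff_forall_notMem]
  rintro ⟨w, hw⟩ hiso
  obtain ⟨q, hq, hadj⟩ := h w hw
  exact hiso ⟨q, hq⟩ hadj

lemma numC5Sq_induce_zero {V : Type*} [Fintype V] (G : SimpleGraph V)
    (hconn : G.Connected) (hdeg : ∀ w, deg G w ≤ 4) (T : Set V) (v0 : V) (hv0 : v0 ∈ T) :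
    numC5SqComponents (G.induce Tᶜ) = 0 := by
  set H := G.induce Tᶜ with hH
  rw [numC5SqComponents, Set.ncard_eq_zero (Set.toFinite _), Set.eq_empty_iff_forall_notMem]
  rintro c ⟨φ⟩
  have key : ∀ x : ↥(c.supp), deg (H.induce c.supp) x = 4 :=
    fun x => (deg_iso φ x).trans (deg_C5Sq _)
  set U : Set V := {p | ∃ h : p ∈ Tᶜ, (⟨p, h⟩ : ↥Tᶜ) ∈ c.supp} with hU
  have hclosed : ∀ p ∈ U, ∀ q, G.Adj p q → q ∈ U := by
    rintro p ⟨hpT, hpsupp⟩ q hadj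
    set x : ↥(c.supp) := ⟨⟨p, hpT⟩, hpsupp⟩ with hx
    have q1 : deg (H.induce c.supp) x ≤ deg H ⟨p, hpT⟩ := deg_induce_le H c.supp x
    have q2 : deg H ⟨p, hpT⟩ ≤ deg G p := deg_induce_le G Tᶜ ⟨p, hpT⟩
    have h4 := key x
    have hHge : 4 ≤ deg H ⟨p, hpT⟩ := le_trans (le_of_eq h4.symm) q1
    have hGsub : G.neighborSet p ⊆ Tᶜ :=
      neighborSet_subset_of_deg_induce_eq G Tᶜ ⟨p, hpT⟩
        (le_trans (hdeg p) (le_trans hHge (le_of_eq rfl)))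
    have hHsub : H.neighborSet ⟨p, hpT⟩ ⊆ c.supp :=
      neighborSet_subset_of_deg_induce_eq H c.supp x
        (le_trans (le_trans q2 (hdeg p)) (le_of_eq h4.symm))
    have hqT : q ∈ Tᶜ := hGsub hadj
    have hHadj : H.Adj ⟨p, hpT⟩ ⟨q, hqT⟩ := hadj
    exact ⟨hqT, hHsub hHadj⟩
  have reach : ∀ p q : V, G.Reachable p q → p ∈ U → q ∈ U := by
    intro p q hr
    obtain ⟨wk⟩ := hr
    induction wk with
    | nil => exact id
    | cons hadj _ ih => exact fun hp => ih (hclosed _ hp _ hadj)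
  obtain ⟨a, ha⟩ := c.exists_rep
  have haU : ↑a ∈ U := ⟨a.2, by rw [Subtype.eta, ConnectedComponent.mem_supp_iff]; exact ha⟩
  obtain ⟨hv0T, -⟩ := reach ↑a v0 (hconn.preconnected ↑a v0) haU
  exact hv0T hv0

lemma sMN_bddAbove {V : Type*} [Fintype V] (G : SimpleGraph V) :
    BddAbove {k | ∃ M : Finset (Sym2 V), IsInducedMatching G M ∧ M.card = k} := by
  classical
  refine ⟨Fintype.card (Sym2 V), ?_⟩
  rintro k ⟨M, -, rfl⟩
  exact Finset.card_le_univ M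

lemma le_sMN {V : Type*} [Fintype V] (G : SimpleGraph V) (M : Finset (Sym2 V))
    (h : IsInducedMatching G M) : M.card ≤ strongMatchingNumber G :=
  le_csSup (sMN_bddAbove G) ⟨M, h, rfl⟩

lemma exists_max {V : Type*} [Fintype V] (G : SimpleGraph V) :
    ∃ M, IsInducedMatching G M ∧ M.card = strongMatchingNumber G := by
  have hne : {k | ∃ M : Finset (Sym2 V), IsInducedMatching G M ∧ M.card = k}.Nonempty :=
    ⟨0, ∅, ⟨by simp, by simp⟩, by simp⟩
  exact Nat.sSup_mem hne (sMN_bddAbove G)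

lemma lift_extend {V : Type*} [Fintype V] (G : SimpleGraph V) (T : Set V)
    [Fintype ↥Tᶜ]
    (E₀ : Finset (Sym2 V)) (h₀ : IsInducedMatching G E₀)
    (hmem : ∀ e ∈ E₀, ∀ p ∈ e, p ∈ T)
    (hnb : ∀ e ∈ E₀, ∀ p ∈ e, ∀ q, G.Adj p q → q ∈ T) :
    strongMatchingNumber (G.induce Tᶜ) + E₀.card ≤ strongMatchingNumber G := by
  classical
  obtain ⟨M, hM, hcard⟩ := exists_max (G.induce Tᶜ)
  set f : Sym2 ↥Tᶜ → Sym2 V := Sym2.map Subtype.val with hf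
  have hfinj : Function.Injective f := Sym2.map.injective Subtype.val_injective
  set M' := M.image f with hM'
  have hM'mem : ∀ e ∈ M', ∀ p ∈ e, p ∈ Tᶜ := by
    intro e he p hp
    obtain ⟨e₀, _, rfl⟩ := Finset.mem_image.mp he
    obtain ⟨p₀, _, rfl⟩ := Sym2.mem_map.mp hp
    exact p₀.2
  have hadj' : ∀ e ∈ M', e ∈ G.edgeSet := by
    intro e he
    obtain ⟨e₀, he₀, rfl⟩ := Finset.mem_image.mp he
    have := hM.1 he₀
    induction e₀ with
    | _ a b => exact this
  have hdisj : Disjoint M' E₀ := by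
    rw [Finset.disjoint_left]
    intro e heM' heE
    have h1 := hM'mem e heM' e.out.1 (Sym2.out_fst_mem e)
    exact h1 (hmem e heE e.out.1 (Sym2.out_fst_mem e))
  have hind : IsInducedMatching G (M' ∪ E₀) := by
    constructor
    · intro e he
      rcases Finset.mem_union.mp he with h | h
      · exact hadj' e h
      · exact h₀.1 h
    · intro e he g hg hne a ha b hb
      rcases Finset.mem_union.mp he with he' | he' <;>
        rcases Finset.mem_union.mp hg with hg' | hg'
      · obtain ⟨e₀, he₀, rfl⟩ := Finset.mem_image.mp he'
        obtain ⟨g₀, hg₀, rfl⟩ := Finset.mem_image.mp hg'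
        have hne₀ : e₀ ≠ g₀ := fun h => hne (by rw [h])
        obtain ⟨a₀, ha₀, rfl⟩ := Sym2.mem_map.mp ha
        obtain ⟨b₀, hb₀, rfl⟩ := Sym2.mem_map.mp hb
        obtain ⟨h1, h2⟩ := hM.2 e₀ he₀ g₀ hg₀ hne₀ a₀ ha₀ b₀ hb₀
        exact ⟨fun h => h1 (Subtype.val_injective h), fun h => h2 h⟩
      · have h1 := hM'mem _ he' a ha
        have h2 := hmem _ hg' b hb
        refine ⟨fun h => h1 (h ▸ h2), fun h => h1 (hnb _ hg' b hb a h.symm)⟩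
      · have h1 := hmem _ he' a ha
        have h2 := hM'mem _ hg' b hb
        refine ⟨fun h => h2 (h ▸ h1), fun h => h2 (hnb _ he' a ha b h)⟩
      · exact h₀.2 e he' g hg' hne a ha b hb
  have hle := le_sMN G _ hind
  rwa [Finset.card_union_of_disjoint hdisj, Finset.card_image_of_injective _ hfinj,
    hcard] at hle
end AuxC5


/-- In a minimum counterexample, no two distinct degree-1
vertices have a common neighbor. -/
theorem stmt6 {V : Type u} [Fintype V] (G : SimpleGraph V)
    (hG : MinCounterexample G) :
    ∀ u₁ u₂, u₁ ≠ u₂ → deg G u₁ = 1 → deg G u₂ = 1 →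
      ¬ ∃ v, G.Adj u₁ v ∧ G.Adj u₂ v := by
  classical
  rintro u₁ u₂ hne12 hd1 hd2 ⟨v, hu₁v, hu₂v⟩
  obtain ⟨hconn, hdeg, hnoiso, -, hlt, hmin⟩ := hG
  -- leaves have singleton neighborhoods
  have hN1 : G.neighborSet u₁ = {v} := by
    obtain ⟨a, ha⟩ := Set.ncard_eq_one.mp hd1
    have h1 : v ∈ G.neighborSet u₁ := hu₁v
    rw [ha] at h1 ⊢
    rw [Set.mem_singleton_iff] at h1
    rw [h1]
  have hN2 : G.neighborSet u₂ = {v} := by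
    obtain ⟨a, ha⟩ := Set.ncard_eq_one.mp hd2
    have h1 : v ∈ G.neighborSet u₂ := hu₂v
    rw [ha] at h1 ⊢
    rw [Set.mem_singleton_iff] at h1
    rw [h1]
  have hadj_u₁ : ∀ q, G.Adj u₁ q → q = v := fun q hq => by
    have : q ∈ G.neighborSet u₁ := hq
    rwa [hN1, Set.mem_singleton_iff] at this
  have hadj_u₂ : ∀ q, G.Adj u₂ q → q = v := fun q hq => by
    have : q ∈ G.neighborSet u₂ := hq
    rwa [hN2, Set.mem_singleton_iff] at this
  set Nv : Set V := G.neighborSet v with hNv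
  have hNv4 : Nv.ncard ≤ 4 := hdeg v
  have hu₁Nv : u₁ ∈ Nv := hu₁v.symm
  have hu₂Nv : u₂ ∈ Nv := hu₂v.symm
  have hvNv : v ∉ Nv := fun h => G.irrefl h
  -- the minimality application
  have apply_min : ∀ T : Set V, v ∈ T →
      (∀ w, w ∉ T → ∃ q, q ∉ T ∧ G.Adj w q) →
      Tᶜ.ncard ≤ 9 * strongMatchingNumber (G.induce Tᶜ) := by
    intro T hvT hisoT
    haveI : Fintype ↥Tᶜ := Fintype.ofFinite _
    have hcompl : T.ncard + Tᶜ.ncard = Fintype.card V := by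
      rw [← Nat.card_eq_fintype_card]
      exact Set.ncard_add_ncard_compl T
    have hccompl : Fintype.card ↥Tᶜ = Tᶜ.ncard := by
      rw [← Nat.card_eq_fintype_card, Nat.card_coe_set_eq]
    have hTpos : 0 < T.ncard := (Set.ncard_pos (Set.toFinite T)).mpr ⟨v, hvT⟩
    have hlt' : Fintype.card ↥Tᶜ < Fintype.card V := by omega
    have hdeg' : ∀ w : ↥Tᶜ, deg (G.induce Tᶜ) w ≤ 4 :=
      fun w => le_trans (deg_induce_le G Tᶜ w) (hdeg ↑w)
    have h := hmin ↥Tᶜ (G.induce Tᶜ) hlt' hdeg'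
    rw [numIsolated_induce_zero G T (fun w hw => hisoT w hw),
      numC5Sq_induce_zero G hconn hdeg T v hvT] at h
    push_cast at h
    have h' : (Tᶜ.ncard : ℤ) ≤ 9 * strongMatchingNumber (G.induce Tᶜ) := by
      rw [← hccompl]; omega
    exact_mod_cast h'
  -- the set I of vertices outside N[v] with all neighbors inside N[v]
  set I : Set V := {w | w ∉ insert v Nv ∧ G.neighborSet w ⊆ insert v Nv} with hI
  set T₁ : Set V := insert v Nv ∪ I with hT₁
  have hvT₁ : v ∈ T₁ := Or.inl (Set.mem_insert v Nv)
  have hiso₁ : ∀ w, w ∉ T₁ → ∃ q, q ∉ T₁ ∧ G.Adj w q := by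
    intro w hw
    have hw1 : w ∉ insert v Nv := fun h => hw (Or.inl h)
    have hw2 : w ∉ I := fun h => hw (Or.inr h)
    have : ¬ G.neighborSet w ⊆ insert v Nv := fun h => hw2 ⟨hw1, h⟩
    obtain ⟨q, hq1, hq2⟩ := Set.not_subset.mp this
    have hqI : q ∉ I := by
      intro hqI
      exact hw1 (hqI.2 (G.adj_symm hq1))
    exact ⟨q, fun h => h.elim (fun h => hq2 h) (fun h => hqI h), hq1⟩
  haveI : Fintype ↥T₁ᶜ := Fintype.ofFinite _
  have hE₁ : IsInducedMatching G {s(u₁, v)} := by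
    constructor
    · intro e he
      rw [Finset.coe_singleton, Set.mem_singleton_iff] at he
      rw [he]
      exact hu₁v
    · intro e he g hg hnefg a _ b _
      rw [Finset.mem_singleton] at he hg
      exact absurd (he.trans hg.symm) hnefg
  have hlift₁ := lift_extend G T₁ {s(u₁, v)} hE₁
    (by
      intro e he p hp
      rw [Finset.mem_singleton] at he
      subst he
      rcases Sym2.mem_iff.mp hp with rfl | rfl
      · exact Or.inl (Set.mem_insert_of_mem _ hu₁Nv)
      · exact hvT₁)
    (by
      intro e he p hp q hq
      rw [Finset.mem_singleton] at he
      subst he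
      rcases Sym2.mem_iff.mp hp with rfl | rfl
      · rw [hadj_u₁ q hq]; exact hvT₁
      · exact Or.inl (Set.mem_insert_of_mem _ hq))
  rw [Finset.card_singleton] at hlift₁
  have hA₁ := apply_min T₁ hvT₁ hiso₁
  have hD₁ : T₁.ncard + T₁ᶜ.ncard = Fintype.card V := by
    rw [← Nat.card_eq_fintype_card]
    exact Set.ncard_add_ncard_compl T₁
  have hT₁le : T₁.ncard ≤ 5 + I.ncard := by
    calc T₁.ncard ≤ (insert v Nv).ncard + I.ncard := Set.ncard_union_le _ _
    _ ≤ (1 + Nv.ncard) + I.ncard := by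
        have := Set.ncard_insert_le v Nv
        omega
    _ ≤ 5 + I.ncard := by omega
  have hI5 : 5 ≤ I.ncard := by omega
  -- S = N(v) minus the two leaves
  set S : Set V := Nv \ {u₁, u₂} with hS
  have hSsub : ({u₁, u₂} : Set V) ⊆ Nv := by
    rintro q hq
    rcases hq with rfl | hq
    · exact hu₁Nv
    · rw [Set.mem_singleton_iff] at hq; subst hq; exact hu₂Nv
  have hS2 : S.ncard ≤ 2 := by
    have h12 : ({u₁, u₂} : Set V).ncard = 2 := Set.ncard_pair hne12
    have hd := Set.ncard_diff_add_ncard_of_subset hSsub (Set.toFinite _)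
    rw [← hS] at hd
    omega
  have hvI : v ∉ I := fun h => h.1 (Set.mem_insert _ _)
  have hI_nbr : ∀ w ∈ I, ∀ q, G.Adj w q → q ∈ S := by
    intro w hwI q hq
    have hqmem : q ∈ insert v Nv := hwI.2 hq
    rcases Set.mem_insert_iff.mp hqmem with rfl | hqNv
    · exact absurd (Set.mem_insert_of_mem _ (G.adj_symm hq : w ∈ Nv)) hwI.1
    · refine ⟨hqNv, ?_⟩
      intro hq12
      rcases Set.mem_insert_iff.mp hq12 with rfl | hq2
      · have hwv := hadj_u₁ w (G.adj_symm hq)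
        apply hwI.1
        rw [hwv]
        exact Set.mem_insert _ _
      · rw [Set.mem_singleton_iff] at hq2
        subst hq2
        have hwv := hadj_u₂ w (G.adj_symm hq)
        apply hwI.1
        rw [hwv]
        exact Set.mem_insert _ _
  have hIne : I.Nonempty := Set.nonempty_of_ncard_ne_zero (by omega)
  have hS2' : S.ncard = 2 := by
    rcases Nat.lt_or_ge S.ncard 2 with hlt2 | hge
    · exfalso
      rcases Set.eq_empty_or_nonempty S with hemp | ⟨x0, hx0⟩
      · obtain ⟨w, hwI⟩ := hIne
        obtain ⟨q, hq⟩ := hnoiso w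
        have := hI_nbr w hwI q hq
        rw [hemp] at this
        exact this
      · have hSx0 : ∀ q ∈ S, q = x0 := by
          intro q hq
          exact (Set.ncard_le_one (Set.toFinite _)).mp (by omega) q hq x0 hx0
        have hIsub : I ⊆ G.neighborSet x0 := by
          intro w hwI
          obtain ⟨q, hq⟩ := hnoiso w
          have hqx0 := hSx0 q (hI_nbr w hwI q hq)
          subst hqx0
          exact G.adj_symm hq
        have h5 := Set.ncard_le_ncard hIsub (Set.toFinite _)
        have h6 : (G.neighborSet x0).ncard ≤ 4 := hdeg x0
        omega
    · omega
  obtain ⟨x, y, hxyne, hSxy⟩ := Set.ncard_eq_two.mp hS2'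
  have hxS : x ∈ S := by rw [hSxy]; exact Set.mem_insert _ _
  have hyS : y ∈ S := by rw [hSxy]; exact Set.mem_insert_of_mem _ rfl
  have hxNv : x ∈ Nv := hxS.1
  have hyNv : y ∈ Nv := hyS.1
  have hvNx : v ∈ G.neighborSet x := G.adj_symm (hxNv : G.Adj v x)
  have hvNy : v ∈ G.neighborSet y := G.adj_symm (hyNv : G.Adj v y)
  have hxI : x ∉ I := fun h => h.1 (Set.mem_insert_of_mem _ hxNv)
  have hyI : y ∉ I := fun h => h.1 (Set.mem_insert_of_mem _ hyNv)
  have hvx : v ≠ x := fun h => hvNv (h ▸ hxNv)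
  have hvy : v ≠ y := fun h => hvNv (h ▸ hyNv)
  set Ix : Set V := I ∩ G.neighborSet x with hIxdef
  set Iy : Set V := I ∩ G.neighborSet y with hIydef
  have hIxsub : Ix ⊆ G.neighborSet x \ {v} := by
    rintro w ⟨hwI, hwx⟩
    exact ⟨hwx, fun h => hvI (by rw [Set.mem_singleton_iff] at h; exact h ▸ hwI)⟩
  have hIysub : Iy ⊆ G.neighborSet y \ {v} := by
    rintro w ⟨hwI, hwy⟩
    exact ⟨hwy, fun h => hvI (by rw [Set.mem_singleton_iff] at h; exact h ▸ hwI)⟩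
  have hIx3 : Ix.ncard ≤ 3 := by
    have h1 := Set.ncard_le_ncard hIxsub (Set.toFinite _)
    have h2 := Set.ncard_diff_add_ncard_of_subset
      (Set.singleton_subset_iff.mpr hvNx) (Set.toFinite _)
    have h3 : (G.neighborSet x).ncard ≤ 4 := hdeg x
    rw [Set.ncard_singleton] at h2
    omega
  have hIy3 : Iy.ncard ≤ 3 := by
    have h1 := Set.ncard_le_ncard hIysub (Set.toFinite _)
    have h2 := Set.ncard_diff_add_ncard_of_subset
      (Set.singleton_subset_iff.mpr hvNy) (Set.toFinite _)
    have h3 : (G.neighborSet y).ncard ≤ 4 := hdeg y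
    rw [Set.ncard_singleton] at h2
    omega
  have hIunion : I ⊆ Ix ∪ Iy := by
    intro w hw
    obtain ⟨q, hq⟩ := hnoiso w
    have hqS := hI_nbr w hw q hq
    rw [hSxy] at hqS
    rcases Set.mem_insert_iff.mp hqS with rfl | hqy
    · exact Or.inl ⟨hw, G.adj_symm hq⟩
    · rw [Set.mem_singleton_iff] at hqy
      subst hqy
      exact Or.inr ⟨hw, G.adj_symm hq⟩
  have hIxy : I.ncard ≤ Ix.ncard + Iy.ncard :=
    le_trans (Set.ncard_le_ncard hIunion (Set.toFinite _)) (Set.ncard_union_le _ _)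
  -- extract private neighbors w₁ of x and w₂ of y
  have hIsplit1 : I ⊆ Iy ∪ (Ix \ Iy) := by
    intro w hw
    by_cases hwy : w ∈ Iy
    · exact Or.inl hwy
    · rcases hIunion hw with hwx | hwy'
      · exact Or.inr ⟨hwx, hwy⟩
      · exact absurd hwy' hwy
  have hIsplit2 : I ⊆ Ix ∪ (Iy \ Ix) := by
    intro w hw
    by_cases hwx : w ∈ Ix
    · exact Or.inl hwx
    · rcases hIunion hw with hwx' | hwy
      · exact absurd hwx' hwx
      · exact Or.inr ⟨hwy, hwx⟩
  have hcard1 : I.ncard ≤ Iy.ncard + (Ix \ Iy).ncard :=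
    le_trans (Set.ncard_le_ncard hIsplit1 (Set.toFinite _)) (Set.ncard_union_le _ _)
  have hcard2 : I.ncard ≤ Ix.ncard + (Iy \ Ix).ncard :=
    le_trans (Set.ncard_le_ncard hIsplit2 (Set.toFinite _)) (Set.ncard_union_le _ _)
  obtain ⟨w₁, hw₁Ix, hw₁nIy⟩ : (Ix \ Iy).Nonempty :=
    Set.nonempty_of_ncard_ne_zero (by omega)
  obtain ⟨w₂, hw₂Iy, hw₂nIx⟩ : (Iy \ Ix).Nonempty :=
    Set.nonempty_of_ncard_ne_zero (by omega)
  have hw₁I : w₁ ∈ I := hw₁Ix.1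
  have hw₂I : w₂ ∈ I := hw₂Iy.1
  have hw₁adjx : G.Adj x w₁ := hw₁Ix.2
  have hw₂adjy : G.Adj y w₂ := hw₂Iy.2
  have hw₁nAdjy : ¬ G.Adj y w₁ := fun h => hw₁nIy ⟨hw₁I, h⟩
  have hw₂nAdjx : ¬ G.Adj x w₂ := fun h => hw₂nIx ⟨hw₂I, h⟩
  have hNw₁ : G.neighborSet w₁ = {x} := by
    apply Set.Subset.antisymm
    · intro q hq
      have hqS := hI_nbr w₁ hw₁I q hq
      rw [hSxy] at hqS
      rcases Set.mem_insert_iff.mp hqS with rfl | hqy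
      · rfl
      · rw [Set.mem_singleton_iff] at hqy
        subst hqy
        exact absurd (G.adj_symm hq) hw₁nAdjy
    · intro q hq
      rw [Set.mem_singleton_iff] at hq
      subst hq
      exact G.adj_symm hw₁adjx
  have hNw₂ : G.neighborSet w₂ = {y} := by
    apply Set.Subset.antisymm
    · intro q hq
      have hqS := hI_nbr w₂ hw₂I q hq
      rw [hSxy] at hqS
      rcases Set.mem_insert_iff.mp hqS with rfl | hqy
      · exact absurd (G.adj_symm hq) hw₂nAdjx
      · exact hqy
    · intro q hq
      rw [Set.mem_singleton_iff] at hq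
      subst hq
      exact G.adj_symm hw₂adjy
  -- x and y are not adjacent
  have hxyAdj : ¬ G.Adj x y := by
    intro hadjxy
    have hsubx : insert v (insert y Ix) ⊆ G.neighborSet x := by
      rintro q hq
      rcases Set.mem_insert_iff.mp hq with rfl | hq'
      · exact hvNx
      · rcases Set.mem_insert_iff.mp hq' with rfl | hq''
        · exact hadjxy
        · exact hq''.2
    have hsuby : insert v (insert x Iy) ⊆ G.neighborSet y := by
      rintro q hq
      rcases Set.mem_insert_iff.mp hq with rfl | hq'
      · exact hvNy
      · rcases Set.mem_insert_iff.mp hq' with rfl | hq''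
        · exact hadjxy.symm
        · exact hq''.2
    have hyIx : y ∉ Ix := fun h => hyI h.1
    have hxIy : x ∉ Iy := fun h => hxI h.1
    have hvyIx : v ∉ insert y Ix := by
      intro h
      rcases Set.mem_insert_iff.mp h with h' | h'
      · exact hvy h'
      · exact hvI h'.1
    have hvxIy : v ∉ insert x Iy := by
      intro h
      rcases Set.mem_insert_iff.mp h with h' | h'
      · exact hvx h'
      · exact hvI h'.1
    have hcx : (insert v (insert y Ix)).ncard = Ix.ncard + 2 := by
      rw [Set.ncard_insert_of_notMem hvyIx (Set.toFinite _),
        Set.ncard_insert_of_notMem hyIx (Set.toFinite _)]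
    have hcy : (insert v (insert x Iy)).ncard = Iy.ncard + 2 := by
      rw [Set.ncard_insert_of_notMem hvxIy (Set.toFinite _),
        Set.ncard_insert_of_notMem hxIy (Set.toFinite _)]
    have h1 := Set.ncard_le_ncard hsubx (Set.toFinite _)
    have h2 := Set.ncard_le_ncard hsuby (Set.toFinite _)
    have h3 : (G.neighborSet x).ncard ≤ 4 := hdeg x
    have h4 : (G.neighborSet y).ncard ≤ 4 := hdeg y
    omega
  -- the set Z of extra neighbors of x,y
  set Zs : Set V := (G.neighborSet x ∪ G.neighborSet y) \ insert v I with hZs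
  have hvIx : v ∉ insert v Ix → False := fun h => h (Set.mem_insert _ _)
  have hinsIx : insert v Ix ⊆ G.neighborSet x := by
    rintro q hq
    rcases Set.mem_insert_iff.mp hq with rfl | hq'
    · exact hvNx
    · exact hq'.2
  have hinsIy : insert v Iy ⊆ G.neighborSet y := by
    rintro q hq
    rcases Set.mem_insert_iff.mp hq with rfl | hq'
    · exact hvNy
    · exact hq'.2
  have hZsplit : Zs ⊆ (G.neighborSet x \ insert v Ix) ∪ (G.neighborSet y \ insert v Iy) := by
    rintro q ⟨hq1, hq2⟩
    rcases hq1 with hqx | hqy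
    · refine Or.inl ⟨hqx, fun h => hq2 ?_⟩
      rcases Set.mem_insert_iff.mp h with rfl | h'
      · exact Set.mem_insert _ _
      · exact Set.mem_insert_of_mem _ h'.1
    · refine Or.inr ⟨hqy, fun h => hq2 ?_⟩
      rcases Set.mem_insert_iff.mp h with rfl | h'
      · exact Set.mem_insert _ _
      · exact Set.mem_insert_of_mem _ h'.1
  have hZ1 : Zs.ncard ≤ 1 := by
    have h0 := le_trans (Set.ncard_le_ncard hZsplit (Set.toFinite _))
      (Set.ncard_union_le _ _)
    have hc1 := Set.ncard_diff_add_ncard_of_subset hinsIx (Set.toFinite _)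
    have hc2 := Set.ncard_diff_add_ncard_of_subset hinsIy (Set.toFinite _)
    have hc3 : (insert v Ix).ncard = Ix.ncard + 1 :=
      Set.ncard_insert_of_notMem (fun h => hvI h.1) (Set.toFinite _)
    have hc4 : (insert v Iy).ncard = Iy.ncard + 1 :=
      Set.ncard_insert_of_notMem (fun h => hvI h.1) (Set.toFinite _)
    have h3 : (G.neighborSet x).ncard ≤ 4 := hdeg x
    have h4 : (G.neighborSet y).ncard ≤ 4 := hdeg y
    omega
  have hNxsub : G.neighborSet x ⊆ insert v (I ∪ Zs) := by
    intro q hq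
    by_cases hqv : q = v
    · rw [hqv]; exact Set.mem_insert _ _
    by_cases hqI : q ∈ I
    · exact Set.mem_insert_of_mem _ (Or.inl hqI)
    · refine Set.mem_insert_of_mem _ (Or.inr ⟨Or.inl hq, ?_⟩)
      intro h
      rcases Set.mem_insert_iff.mp h with h' | h'
      · exact hqv h'
      · exact hqI h'
  have hNysub : G.neighborSet y ⊆ insert v (I ∪ Zs) := by
    intro q hq
    by_cases hqv : q = v
    · rw [hqv]; exact Set.mem_insert _ _
    by_cases hqI : q ∈ I
    · exact Set.mem_insert_of_mem _ (Or.inl hqI)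
    · refine Set.mem_insert_of_mem _ (Or.inr ⟨Or.inr hq, ?_⟩)
      intro h
      rcases Set.mem_insert_iff.mp h with h' | h'
      · exact hqv h'
      · exact hqI h'
  set T₂' : Set V := insert v Nv ∪ I ∪ Zs with hT₂'
  set I₂ : Set V := {w | w ∉ T₂' ∧ G.neighborSet w ⊆ T₂'} with hI₂def
  set T₂ : Set V := T₂' ∪ I₂ with hT₂
  have hNvmem : ∀ q ∈ Nv, q ∈ T₂' := fun q hq =>
    Or.inl (Or.inl (Set.mem_insert_of_mem _ hq))
  have hvT₂' : v ∈ T₂' := Or.inl (Or.inl (Set.mem_insert _ _))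
  have hIT₂' : I ⊆ T₂' := fun w hw => Or.inl (Or.inr hw)
  have hZT₂' : Zs ⊆ T₂' := fun w hw => Or.inr hw
  have hInsSub : insert v (I ∪ Zs) ⊆ T₂' := by
    intro q hq
    rcases Set.mem_insert_iff.mp hq with rfl | hq'
    · exact hvT₂'
    · rcases hq' with h | h
      · exact hIT₂' h
      · exact hZT₂' h
  have hNvsplit : ∀ q ∈ Nv, q = u₁ ∨ q = u₂ ∨ q = x ∨ q = y := by
    intro q hq
    by_cases h1 : q = u₁
    · exact Or.inl h1
    by_cases h2 : q = u₂
    · exact Or.inr (Or.inl h2)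
    have hqS : q ∈ S := by
      refine ⟨hq, ?_⟩
      intro h
      rcases Set.mem_insert_iff.mp h with h' | h'
      · exact h1 h'
      · rw [Set.mem_singleton_iff] at h'; exact h2 h'
    rw [hSxy] at hqS
    rcases Set.mem_insert_iff.mp hqS with h' | h'
    · exact Or.inr (Or.inr (Or.inl h'))
    · rw [Set.mem_singleton_iff] at h'
      exact Or.inr (Or.inr (Or.inr h'))
  have hI₂Z : ∀ w ∈ I₂, G.neighborSet w ⊆ Zs := by
    intro w hw q hq
    have hqT := hw.2 hq
    rcases hqT with hqa | hqZ
    · rcases hqa with hqb | hqI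
      · exfalso
        rcases Set.mem_insert_iff.mp hqb with rfl | hqNv
        · exact hw.1 (hNvmem w (G.adj_symm hq))
        · rcases hNvsplit q hqNv with rfl | rfl | rfl | rfl
          · have hwv := hadj_u₁ w (G.adj_symm hq)
            exact hw.1 (by rw [hwv]; exact hvT₂')
          · have hwv := hadj_u₂ w (G.adj_symm hq)
            exact hw.1 (by rw [hwv]; exact hvT₂')
          · exact hw.1 (hInsSub (hNxsub (G.adj_symm hq)))
          · exact hw.1 (hInsSub (hNysub (G.adj_symm hq)))
      · exfalso
        have hwS := hI_nbr q hqI w (G.adj_symm hq)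
        rw [hSxy] at hwS
        rcases Set.mem_insert_iff.mp hwS with rfl | h'
        · exact hw.1 (hNvmem _ hxNv)
        · rw [Set.mem_singleton_iff] at h'
          exact hw.1 (by rw [h']; exact hNvmem _ hyNv)
    · exact hqZ
  have hI₂4 : I₂.ncard ≤ 4 := by
    rcases Set.eq_empty_or_nonempty Zs with hemp | ⟨z, hz⟩
    · have hIemp : I₂ = ∅ := by
        rw [Set.eq_empty_iff_forall_notMem]
        intro w hw
        obtain ⟨q, hq⟩ := hnoiso w
        have := hI₂Z w hw hq
        rw [hemp] at this
        exact this
      rw [hIemp, Set.ncard_empty]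
      omega
    · have hZz : ∀ q ∈ Zs, q = z := fun q hq =>
        (Set.ncard_le_one (Set.toFinite _)).mp hZ1 q hq z hz
      have hsub : I₂ ⊆ G.neighborSet z := by
        intro w hw
        obtain ⟨q, hq⟩ := hnoiso w
        have hqz := hZz q (hI₂Z w hw hq)
        exact G.adj_symm (hqz ▸ hq)
      have h5 := Set.ncard_le_ncard hsub (Set.toFinite _)
      have h6 : (G.neighborSet z).ncard ≤ 4 := hdeg z
      omega
  have hvT₂ : v ∈ T₂ := Or.inl hvT₂'
  have hiso₂ : ∀ w, w ∉ T₂ → ∃ q, q ∉ T₂ ∧ G.Adj w q := by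
    intro w hw
    have hw1 : w ∉ T₂' := fun h => hw (Or.inl h)
    have hw2 : w ∉ I₂ := fun h => hw (Or.inr h)
    have hns : ¬ G.neighborSet w ⊆ T₂' := fun h => hw2 ⟨hw1, h⟩
    obtain ⟨q, hq1, hq2⟩ := Set.not_subset.mp hns
    refine ⟨q, ?_, hq1⟩
    rintro (hqT' | hqI₂)
    · exact hq2 hqT'
    · exact hw1 (hZT₂' (hI₂Z q hqI₂ (G.adj_symm hq1)))
  haveI : Fintype ↥T₂ᶜ := Fintype.ofFinite _
  -- distinctness and non-adjacency facts for the matching {s(x,w₁), s(y,w₂)}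
  have hxw₂ : x ≠ w₂ := fun h => hxI (by rw [h]; exact hw₂I)
  have hyw₁ : y ≠ w₁ := fun h => hyI (by rw [h]; exact hw₁I)
  have hw₁w₂ : w₁ ≠ w₂ := fun h => hw₂nIx (by rw [← h]; exact hw₁Ix)
  have hnadjw₁y : ¬ G.Adj w₁ y := fun h => hw₁nAdjy (G.adj_symm h)
  have hnadjw₁w₂ : ¬ G.Adj w₁ w₂ := by
    intro h
    have : w₂ ∈ G.neighborSet w₁ := h
    rw [hNw₁, Set.mem_singleton_iff] at this
    exact hxw₂ this.symm
  have hE₂ne : s(x, w₁) ≠ s(y, w₂) := by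
    intro h
    rcases Sym2.eq_iff.mp h with ⟨h1, h2⟩ | ⟨h1, h2⟩
    · exact hxyne h1
    · exact hxw₂ h1
  have hE₂card : ({s(x, w₁), s(y, w₂)} : Finset (Sym2 V)).card = 2 := by
    rw [Finset.card_insert_of_notMem (by simp [hE₂ne]), Finset.card_singleton]
  have hE₂ind : IsInducedMatching G {s(x, w₁), s(y, w₂)} := by
    constructor
    · intro e he
      rw [Finset.coe_insert, Set.mem_insert_iff, Finset.coe_singleton,
        Set.mem_singleton_iff] at he
      rcases he with rfl | rfl
      · exact hw₁adjx
      · exact hw₂adjy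
    · intro e he g hg hnefg a ha b hb
      rcases Finset.mem_insert.mp he with rfl | he'
      · rcases Finset.mem_insert.mp hg with rfl | hg'
        · exact absurd rfl hnefg
        · rw [Finset.mem_singleton] at hg'
          subst hg'
          rcases Sym2.mem_iff.mp ha with rfl | rfl <;>
            rcases Sym2.mem_iff.mp hb with rfl | rfl
          · exact ⟨hxyne, hxyAdj⟩
          · exact ⟨hxw₂, hw₂nAdjx⟩
          · exact ⟨fun h => hyw₁ h.symm, hnadjw₁y⟩
          · exact ⟨hw₁w₂, hnadjw₁w₂⟩
      · rw [Finset.mem_singleton] at he'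
        subst he'
        rcases Finset.mem_insert.mp hg with rfl | hg'
        · rcases Sym2.mem_iff.mp ha with rfl | rfl <;>
            rcases Sym2.mem_iff.mp hb with rfl | rfl
          · exact ⟨fun h => hxyne h.symm, fun h => hxyAdj (G.adj_symm h)⟩
          · exact ⟨hyw₁, fun h => hnadjw₁y (G.adj_symm h)⟩
          · exact ⟨fun h => hxw₂ h.symm, fun h => hw₂nAdjx (G.adj_symm h)⟩
          · exact ⟨fun h => hw₁w₂ h.symm, fun h => hnadjw₁w₂ (G.adj_symm h)⟩
        · rw [Finset.mem_singleton] at hg'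
          subst hg'
          exact absurd rfl hnefg
  have hlift₂ := lift_extend G T₂ {s(x, w₁), s(y, w₂)} hE₂ind
    (by
      intro e he p hp
      rcases Finset.mem_insert.mp he with rfl | he'
      · rcases Sym2.mem_iff.mp hp with rfl | rfl
        · exact Or.inl (hNvmem _ hxNv)
        · exact Or.inl (hIT₂' hw₁I)
      · rw [Finset.mem_singleton] at he'
        subst he'
        rcases Sym2.mem_iff.mp hp with rfl | rfl
        · exact Or.inl (hNvmem _ hyNv)
        · exact Or.inl (hIT₂' hw₂I))
    (by
      intro e he p hp q hq
      rcases Finset.mem_insert.mp he with rfl | he'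
      · rcases Sym2.mem_iff.mp hp with rfl | rfl
        · exact Or.inl (hInsSub (hNxsub hq))
        · have : q ∈ G.neighborSet p := hq
          rw [hNw₁, Set.mem_singleton_iff] at this
          rw [this]
          exact Or.inl (hNvmem _ hxNv)
      · rw [Finset.mem_singleton] at he'
        subst he'
        rcases Sym2.mem_iff.mp hp with rfl | rfl
        · exact Or.inl (hInsSub (hNysub hq))
        · have : q ∈ G.neighborSet p := hq
          rw [hNw₂, Set.mem_singleton_iff] at this
          rw [this]
          exact Or.inl (hNvmem _ hyNv))
  rw [hE₂card] at hlift₂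
  have hA₂ := apply_min T₂ hvT₂ hiso₂
  have hD₂ : T₂.ncard + T₂ᶜ.ncard = Fintype.card V := by
    rw [← Nat.card_eq_fintype_card]
    exact Set.ncard_add_ncard_compl T₂
  have hb1 : T₂.ncard ≤ T₂'.ncard + I₂.ncard := Set.ncard_union_le _ _
  have hb2 : T₂'.ncard ≤ (insert v Nv ∪ I).ncard + Zs.ncard := Set.ncard_union_le _ _
  have hb3 : (insert v Nv ∪ I).ncard ≤ (insert v Nv).ncard + I.ncard :=
    Set.ncard_union_le _ _
  have hb4 : (insert v Nv).ncard ≤ 1 + Nv.ncard := by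
    have := Set.ncard_insert_le v Nv
    omega
  omega
end

section
/- If G is a minimum counterexample, then the minimum degree of G is at least 2. -/
open SimpleGraph

universe u

set_option linter.unusedSectionVars false
section Scaffold
open SimpleGraph
variable {V : Type u} [Fintype V] (G : SimpleGraph V)

lemma isim_empty : IsInducedMatching G (∅ : Finset (Sym2 V)) := by
  constructor
  · simp
  · intro e he; simp at he

lemma matchings_bdd :
    BddAbove {k | ∃ M : Finset (Sym2 V), IsInducedMatching G M ∧ M.card = k} := by
  classical
  refine ⟨Fintype.card (Sym2 V), ?_⟩
  rintro k ⟨M, _, rfl⟩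
  exact Finset.card_le_univ M

lemma le_nu {M : Finset (Sym2 V)} (hM : IsInducedMatching G M) :
    M.card ≤ strongMatchingNumber G :=
  le_csSup (matchings_bdd G) ⟨M, hM, rfl⟩

lemma exists_nu : ∃ M : Finset (Sym2 V),
    IsInducedMatching G M ∧ M.card = strongMatchingNumber G := by
  have h := Nat.sSup_mem (s := {k | ∃ M : Finset (Sym2 V), IsInducedMatching G M ∧ M.card = k})
    ⟨0, ∅, isim_empty G, by simp⟩ (matchings_bdd G)
  exact h

lemma mem_of_walk {T : Set V} (hT : ∀ x ∈ T, ∀ y, G.Adj x y → y ∈ T)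
    {a b : V} (w : G.Walk a b) (ha : a ∈ T) : b ∈ T := by
  induction w with
  | nil => exact ha
  | cons h _ ih => exact ih (hT _ ha _ h)

lemma deg_iso_s8 {V1 V2 : Type*} (G1 : SimpleGraph V1) (G2 : SimpleGraph V2)
    (φ : G1 ≃g G2) (v : V1) : deg G1 v = deg G2 (φ v) := by
  unfold deg
  rw [← Nat.card_coe_set_eq, ← Nat.card_coe_set_eq]
  exact Nat.card_congr (φ.mapNeighborSet v)

lemma c5sq_deg (x : ZMod 5 × Fin 2) : deg C5Sq x = 4 := by
  have : C5Sq.neighborSet x =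
      ↑(Finset.univ.filter (fun y : ZMod 5 × Fin 2 => x ≠ y ∧ (x.1 = y.1 + 1 ∨ y.1 = x.1 + 1))) := by
    ext y
    simp [C5Sq, SimpleGraph.fromRel_adj, SimpleGraph.neighborSet]
  have hc : ∀ z : ZMod 5 × Fin 2,
      (Finset.univ.filter (fun y : ZMod 5 × Fin 2 => z ≠ y ∧ (z.1 = y.1 + 1 ∨ y.1 = z.1 + 1))).card = 4 := by
    decide
  rw [deg, this, Set.ncard_coe_finset, hc]

end Scaffold
section Master
open SimpleGraph
variable {V : Type u} [Fintype V] (G : SimpleGraph V)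

lemma deg_induce_s8 (s : Set V) (z : ↥s) : deg (G.induce s) z ≤ deg G z.val := by
  exact Set.ncard_le_ncard_of_injOn (fun y => y.val)
    (fun a ha => ha) (fun a _ b _ h => Subtype.val_injective h) (Set.toFinite _)

noncomputable def liftEmb (s : Set V) : Sym2 ↥s ↪ Sym2 V :=
  ⟨Sym2.map Subtype.val, Sym2.map.injective Subtype.val_injective⟩

lemma lift_matching (s : Set V) (M' : Finset (Sym2 ↥s))
    (h : IsInducedMatching (G.induce s) M') :
    IsInducedMatching G (M'.map (liftEmb s)) ∧
      (∀ e ∈ M'.map (liftEmb s), ∀ a ∈ e, a ∈ s) := by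
  have hmem : ∀ e ∈ M'.map (liftEmb s), ∀ a ∈ e, a ∈ s := by
    intro e he a ha
    obtain ⟨e', he', rfl⟩ := Finset.mem_map.mp he
    obtain ⟨a', _, rfl⟩ := Sym2.mem_map.mp ha
    exact a'.prop
  refine ⟨⟨?_, ?_⟩, hmem⟩
  · intro e he
    obtain ⟨e', he', rfl⟩ := Finset.mem_map.mp he
    have he'' : e' ∈ (G.induce s).edgeSet := h.1 he'
    revert he''
    induction e' using Sym2.ind with
    | _ x y => exact fun hxy => hxy
  · intro e he f hf hef a ha b hb
    obtain ⟨e', he', rfl⟩ := Finset.mem_map.mp he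
    obtain ⟨f', hf', rfl⟩ := Finset.mem_map.mp hf
    obtain ⟨a', ha', rfl⟩ := Sym2.mem_map.mp ha
    obtain ⟨b', hb', rfl⟩ := Sym2.mem_map.mp hb
    have hne : e' ≠ f' := fun hc => hef (by rw [hc])
    obtain ⟨h1, h2⟩ := h.2 e' he' f' hf' hne a' ha' b' hb'
    constructor
    · exact fun hc => h1 (Subtype.val_injective hc)
    · exact fun hc => h2 hc

lemma master (hG : MinCounterexample G) (S : Set V) (hSne : S.Nonempty)
    (hcl : ∀ z, z ∉ S → ¬ (G.neighborSet z ⊆ S))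
    (M : Finset (Sym2 V)) (hM : IsInducedMatching G M)
    (hMS : ∀ e ∈ M, ∀ a ∈ e, a ∈ S ∧ G.neighborSet a ⊆ S) :
    9 * M.card + 1 ≤ S.ncard := by
  classical
  obtain ⟨hconn, hdeg4, _, _, hsmall, IH⟩ := hG
  set T : Set V := Sᶜ with hT
  -- cardinalities
  have hScard : S.ncard = Fintype.card ↥S := by
    rw [Set.ncard_eq_toFinset_card', Set.toFinset_card]
  have hTcard : Fintype.card ↥T = Fintype.card V - Fintype.card ↥S :=
    Fintype.card_compl_set S
  have hSle : Fintype.card ↥S ≤ Fintype.card V := Fintype.card_subtype_le _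
  have hSpos : 0 < Fintype.card ↥S :=
    Fintype.card_pos_iff.mpr (Set.nonempty_coe_sort.mpr hSne)
  have hlt : Fintype.card ↥T < Fintype.card V := by omega
  have hdegH : ∀ w, deg (G.induce T) w ≤ 4 :=
    fun w => le_trans (deg_induce_s8 G T w) (hdeg4 _)
  have hIH := IH ↥T (G.induce T) hlt hdegH
  -- no isolated vertices in the induced graph
  have hiso0 : numIsolated (G.induce T) = 0 := by
    have : {v : ↥T | ∀ w, ¬ (G.induce T).Adj v w} = ∅ := by
      rw [Set.eq_empty_iff_forall_notMem]
      intro z hz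
      refine hcl z.val z.prop ?_
      intro y hy
      by_contra hyS
      exact hz ⟨y, hyS⟩ hy
    rw [numIsolated, this, Set.ncard_empty]
  -- no C5Sq components in the induced graph
  have hc50 : numC5SqComponents (G.induce T) = 0 := by
    have : {c : (G.induce T).ConnectedComponent |
        Nonempty ((G.induce T).induce c.supp ≃g C5Sq)} = ∅ := by
      rw [Set.eq_empty_iff_forall_notMem]
      rintro c ⟨φ⟩
      set U : Set V := Subtype.val '' c.supp with hU
      have hUT : U ⊆ T := by rintro x ⟨ξ, _, rfl⟩; exact ξ.prop
      have hUclosed : ∀ x ∈ U, ∀ y, G.Adj x y → y ∈ U := by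
        rintro x ⟨ζ, hζ, rfl⟩ y hadj
        set ξ : ↥c.supp := ⟨ζ, hζ⟩ with hξ
        have hdξ : deg ((G.induce T).induce c.supp) ξ = 4 := by
          rw [deg_iso_s8 _ _ φ ξ, c5sq_deg]
        set img : Set V :=
          (fun (η : ↥c.supp) => η.val.val) '' (((G.induce T).induce c.supp).neighborSet ξ)
          with himg
        have himgsub : img ⊆ G.neighborSet ζ.val := by
          rintro _ ⟨η, hη, rfl⟩
          exact hη
        have himgcard : img.ncard = 4 := by
          have hinj : Set.InjOn (fun (η : ↥c.supp) => η.val.val)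
              (((G.induce T).induce c.supp).neighborSet ξ) :=
            fun a _ b _ hab => Subtype.val_injective (Subtype.val_injective hab)
          rw [himg, Set.ncard_image_of_injOn hinj]
          exact hdξ
        have heq : img = G.neighborSet ζ.val := by
          apply Set.eq_of_subset_of_ncard_le himgsub
          rw [himgcard]
          exact hdeg4 _
        have : y ∈ img := by rw [heq]; exact hadj
        obtain ⟨η, _, rfl⟩ := this
        exact ⟨η.val, η.prop, rfl⟩
      obtain ⟨z0, hz0⟩ := c.exists_rep
      have hz0U : z0.val ∈ U := ⟨z0, (ConnectedComponent.mem_supp_iff _ _).mpr hz0, rfl⟩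
      obtain ⟨s0, hs0⟩ := hSne
      obtain ⟨w⟩ := hconn.preconnected z0.val s0
      have : s0 ∈ U := mem_of_walk G hUclosed w hz0U
      exact (hUT this) hs0
    rw [numC5SqComponents, this, Set.ncard_empty]
  -- matching lifting
  obtain ⟨M', hM', hM'card⟩ := exists_nu (G.induce T)
  obtain ⟨hlift, hmemT⟩ := lift_matching G T M' hM'
  set M'' : Finset (Sym2 V) := M'.map (liftEmb T) with hM''
  have hdisj : Disjoint M'' M := by
    rw [Finset.disjoint_left]
    intro e heM'' heM
    have hae : ∃ a, a ∈ e := Sym2.ind (fun x y => ⟨x, Sym2.mem_mk_left x y⟩) e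
    obtain ⟨a, ha⟩ := hae
    have h1 : a ∈ T := hmemT e heM'' a ha
    have h2 : a ∈ S := (hMS e heM a ha).1
    exact h1 h2
  have hunion : IsInducedMatching G (M'' ∪ M) := by
    constructor
    · intro e he
      rcases Finset.mem_union.mp he with h | h
      · exact hlift.1 h
      · exact hM.1 h
    · intro e he f hf hef a ha b hb
      rcases Finset.mem_union.mp he with he' | he' <;>
        rcases Finset.mem_union.mp hf with hf' | hf'
      · exact hlift.2 e he' f hf' hef a ha b hb
      · have haT : a ∈ T := hmemT e he' a ha
        obtain ⟨hbS, hbN⟩ := hMS f hf' b hb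
        refine ⟨fun hc => haT (hc ▸ hbS), fun hc => haT (hbN hc.symm)⟩
      · have hbT : b ∈ T := hmemT f hf' b hb
        obtain ⟨haS, haN⟩ := hMS e he' a ha
        refine ⟨fun hc => hbT (hc ▸ haS), fun hc => hbT (haN hc)⟩
      · exact hM.2 e he' f hf' hef a ha b hb
  have hcardU : (M'' ∪ M).card = strongMatchingNumber (G.induce T) + M.card := by
    rw [Finset.card_union_of_disjoint hdisj, hM'', Finset.card_map, hM'card]
  have hchain : strongMatchingNumber (G.induce T) + M.card ≤ strongMatchingNumber G := by
    rw [← hcardU]; exact le_nu G hunion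
  -- arithmetic
  rw [hiso0, hc50] at hIH
  push_cast at hIH
  have h9 : 9 * strongMatchingNumber G < Fintype.card V := hsmall
  have hTeq : Fintype.card ↥T = Fintype.card V - S.ncard := by omega
  omega

end Master
section Schemes
open SimpleGraph Set

variable {V : Type u} [Fintype V]

/-- closed neighborhood -/
def NBof (G : SimpleGraph V) (u : V) : Set V := insert u (G.neighborSet u)

/-- vertices outside N[u] all of whose neighbors lie in N(u) -/
def Iof (G : SimpleGraph V) (u : V) : Set V :=
  {z | z ∉ NBof G u ∧ G.neighborSet z ⊆ G.neighborSet u}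

def Yof (G : SimpleGraph V) (u x : V) : Set V :=
  G.neighborSet x \ (NBof G u ∪ Iof G u)

def clsOf (G : SimpleGraph V) (B : Set V) : Set V :=
  B ∪ {z | z ∉ B ∧ G.neighborSet z ⊆ B}

variable {G : SimpleGraph V} {u v : V}

lemma cls_spec (B : Set V) : ∀ z, z ∉ clsOf G B → ¬ (G.neighborSet z ⊆ clsOf G B) := by
  intro z hz hsub
  apply hz
  right
  have hzB : z ∉ B := fun h => hz (Or.inl h)
  refine ⟨hzB, ?_⟩
  intro y hy
  rcases hsub hy with h | h
  · exact h
  · exfalso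
    apply hz
    left
    exact h.2 ((G.adj_symm hy) : G.Adj y z)

lemma cls_ncard_le (B A : Set V) (h : {z | z ∉ B ∧ G.neighborSet z ⊆ B} ⊆ A) :
    (clsOf G B).ncard ≤ B.ncard + A.ncard :=
  le_trans (Set.ncard_union_le _ _) (by
    have := Set.ncard_le_ncard h (Set.toFinite A)
    omega)

lemma ncard_finset_biUnion_le {β : Type v} (t : Finset V) (f : V → Set β) (k : ℕ)
    (hf : ∀ a ∈ t, (f a).ncard ≤ k) : (⋃ a ∈ t, f a).ncard ≤ k * t.card := by
  classical
  induction t using Finset.induction_on with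
  | empty => simp
  | @insert a t ha ih =>
    rw [Finset.set_biUnion_insert]
    have h1 : (f a ∪ ⋃ x ∈ t, f x).ncard ≤ (f a).ncard + (⋃ x ∈ t, f x).ncard :=
      Set.ncard_union_le _ _
    have h2 := ih (fun b hb => hf b (Finset.mem_insert_of_mem hb))
    have h3 := hf a (Finset.mem_insert_self a t)
    have h4 : (insert a t).card = t.card + 1 := Finset.card_insert_of_notMem ha
    have h5 : k * (t.card + 1) = k * t.card + k := by ring
    rw [h4]
    omega

lemma ncard_biUnion_le {β : Type v} (s : Set V) (f : V → Set β) (k : ℕ)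
    (hf : ∀ a ∈ s, (f a).ncard ≤ k) : (⋃ a ∈ s, f a).ncard ≤ k * s.ncard := by
  classical
  have h1 : (⋃ a ∈ s, f a) = ⋃ a ∈ s.toFinset, f a := by
    apply Set.iUnion_congr
    intro a
    simp
  rw [h1, Set.ncard_eq_toFinset_card' s]
  exact ncard_finset_biUnion_le s.toFinset f k (fun a ha => hf a (Set.mem_toFinset.mp ha))

/-- basic facts -/
lemma adj_uv (hNv : G.neighborSet v = {u}) : G.Adj u v := by
  have : u ∈ G.neighborSet v := by rw [hNv]; exact rfl
  exact (G.adj_symm this)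

lemma v_mem_Nu (hNv : G.neighborSet v = {u}) : v ∈ G.neighborSet u := adj_uv hNv

lemma Iof_nbrs (hNv : G.neighborSet v = {u}) {w : V} (hw : w ∈ Iof G u) :
    G.neighborSet w ⊆ G.neighborSet u \ {v} := by
  intro y hy
  refine ⟨hw.2 hy, ?_⟩
  intro hyv
  rw [Set.mem_singleton_iff] at hyv
  have h2 : G.Adj y w := G.adj_symm hy
  rw [hyv] at h2
  have h3 : w ∈ G.neighborSet v := h2
  rw [hNv, Set.mem_singleton_iff] at h3
  exact hw.1 (Or.inl h3)

lemma Iof_not_NB {w : V} (hw : w ∈ Iof G u) : w ∉ NBof G u := hw.1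

lemma NB_ncard : (NBof G u).ncard = deg G u + 1 := by
  rw [NBof, Set.ncard_insert_of_notMem (G.notMem_neighborSet_self) (Set.toFinite _)]
  rfl

lemma isim_single {a b : V} (h : G.Adj a b) :
    IsInducedMatching G ({s(a, b)} : Finset (Sym2 V)) := by
  constructor
  · intro e he
    simp only [Finset.coe_singleton, Set.mem_singleton_iff] at he
    subst he
    exact h
  · intro e he f hf hef
    simp only [Finset.mem_singleton] at he hf
    subst he; subst hf
    exact absurd rfl hef

/-- The basic scheme : remove N[u] ∪ I, use the matching {uv}. -/
lemma base_scheme (hG : MinCounterexample G) (hNv : G.neighborSet v = {u})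
    (hcost : (NBof G u).ncard + (Iof G u).ncard ≤ 9) : False := by
  classical
  have hadj : G.Adj u v := adj_uv hNv
  set S : Set V := NBof G u ∪ Iof G u with hS
  have hcl : ∀ z, z ∉ S → ¬ (G.neighborSet z ⊆ S) := by
    intro z hz hsub
    apply hz
    right
    refine ⟨fun h => hz (Or.inl h), ?_⟩
    intro y hy
    rcases hsub hy with h | h
    · rcases h with h | h
      · exfalso; subst h; exact hz (Or.inl (Or.inr (G.adj_symm hy)))
      · exact h
    · exfalso
      exact hz (Or.inl (Or.inr (h.2 (G.adj_symm hy))))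
  have hMS : ∀ e ∈ ({s(u, v)} : Finset (Sym2 V)), ∀ a ∈ e, a ∈ S ∧ G.neighborSet a ⊆ S := by
    intro e he a ha
    simp only [Finset.mem_singleton] at he
    subst he
    rw [Sym2.mem_iff] at ha
    rcases ha with rfl | rfl
    · exact ⟨Or.inl (Or.inl rfl), fun y hy => Or.inl (Or.inr hy)⟩
    · refine ⟨Or.inl (Or.inr (v_mem_Nu hNv)), ?_⟩
      rw [hNv]
      intro y hy
      rw [Set.mem_singleton_iff] at hy
      subst hy
      exact Or.inl (Or.inl rfl)
  have hm := master G hG S ⟨u, Or.inl (Or.inl rfl)⟩ hcl _ (isim_single hadj) hMS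
  rw [Finset.card_singleton] at hm
  have : S.ncard ≤ (NBof G u).ncard + (Iof G u).ncard := Set.ncard_union_le _ _
  omega

end Schemes
section PairScheme
open SimpleGraph Set
variable {V : Type u} [Fintype V] {G : SimpleGraph V} {u v : V}

lemma mem_NB_self : u ∈ NBof G u := Set.mem_insert _ _

lemma mem_NB_of_nbr {x : V} (h : x ∈ G.neighborSet u) : x ∈ NBof G u :=
  Set.mem_insert_iff.mpr (Or.inr h)

lemma nbr_sub_base (x : V) :
    G.neighborSet x ⊆ (NBof G u ∪ Iof G u) ∪ Yof G u x := by
  intro y hy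
  by_cases h : y ∈ NBof G u ∪ Iof G u
  · exact Or.inl h
  · exact Or.inr ⟨hy, h⟩

lemma Iof_nonadj {w w' : V} (hw : w ∈ Iof G u) (hw' : w' ∈ Iof G u) :
    ¬ G.Adj w w' := fun h => hw'.1 (mem_NB_of_nbr (hw.2 h))

lemma Iof_ne_nbr {w x : V} (hw : w ∈ Iof G u) (hx : x ∈ G.neighborSet u) :
    x ≠ w := fun h => hw.1 (h ▸ mem_NB_of_nbr hx)

open Classical in
lemma pair_scheme (hG : MinCounterexample G) (hNv : G.neighborSet v = {u})
    {xa xb w w' : V}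
    (hxa : xa ∈ G.neighborSet u) (hxb : xb ∈ G.neighborSet u) (hab : xa ≠ xb)
    (nab : ¬ G.Adj xa xb)
    (hw : w ∈ Iof G u) (hw' : w' ∈ Iof G u) (hww' : w ≠ w')
    (h1 : G.Adj xa w) (h2 : G.Adj xb w')
    (naw' : ¬ G.Adj xa w') (nbw : ¬ G.Adj xb w)
    (hcost : (NBof G u).ncard + (Iof G u).ncard +
      4 * ((Yof G u xa).ncard + (Yof G u xb).ncard) +
      ((⋃ x ∈ (G.neighborSet u \ {v, xa, xb}), G.neighborSet x) \
        (NBof G u ∪ Iof G u)).ncard ≤ 18) : False := by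
  have hniso : ∀ z, ∃ y, G.Adj z y := hG.2.2.1
  have hdeg4 : ∀ z, deg G z ≤ 4 := hG.2.1
  set NB := NBof G u with hNB
  set I := Iof G u with hI
  set Ya := Yof G u xa with hYa
  set Yb := Yof G u xb with hYb
  set Yr := ((⋃ x ∈ (G.neighborSet u \ {v, xa, xb}), G.neighborSet x) \ (NB ∪ I)) with hYr
  set B := (NB ∪ I) ∪ (Ya ∪ Yb) with hB
  have hNIB : NB ∪ I ⊆ B := Set.subset_union_left
  have hNa : G.neighborSet xa ⊆ B := by
    intro y hy
    rcases nbr_sub_base xa hy with h | h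
    · exact Or.inl h
    · exact Or.inr (Or.inl h)
  have hNb : G.neighborSet xb ⊆ B := by
    intro y hy
    rcases nbr_sub_base xb hy with h | h
    · exact Or.inl h
    · exact Or.inr (Or.inr h)
  have hNw : G.neighborSet w ⊆ B := fun y hy =>
    Or.inl (Or.inl (mem_NB_of_nbr (hw.2 hy)))
  have hNw' : G.neighborSet w' ⊆ B := fun y hy =>
    Or.inl (Or.inl (mem_NB_of_nbr (hw'.2 hy)))
  set S := clsOf G B with hScls
  have hBS : B ⊆ S := Set.subset_union_left
  have hxaB : xa ∈ B := Or.inl (Or.inl (mem_NB_of_nbr hxa))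
  have hxbB : xb ∈ B := Or.inl (Or.inl (mem_NB_of_nbr hxb))
  have hwB : w ∈ B := Or.inl (Or.inr hw)
  have hw'B : w' ∈ B := Or.inl (Or.inr hw')
  have haw' : xa ≠ w' := Iof_ne_nbr hw' hxa
  have hwb : w ≠ xb := (Iof_ne_nbr hw hxb).symm
  have nww' : ¬ G.Adj w w' := Iof_nonadj hw hw'
  -- the matching
  set M : Finset (Sym2 V) := {s(xa, w), s(xb, w')} with hM
  have hEne : (s(xa, w) : Sym2 V) ≠ s(xb, w') := by
    intro h
    rw [Sym2.eq_iff] at h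
    rcases h with ⟨rfl, rfl⟩ | ⟨rfl, rfl⟩
    · exact hab rfl
    · exact haw' rfl
  have hcard2 : M.card = 2 := Finset.card_pair hEne
  have hmemM : ∀ e ∈ M, e = s(xa, w) ∨ e = s(xb, w') := by
    intro e he
    rcases Finset.mem_insert.mp he with h | h
    · exact Or.inl h
    · exact Or.inr (Finset.mem_singleton.mp h)
  have hMmatch : IsInducedMatching G M := by
    constructor
    · intro e he
      rcases hmemM e he with rfl | rfl
      · exact h1
      · exact h2
    · intro e he f hf hef a ha b hb
      rcases hmemM e he with rfl | rfl <;> rcases hmemM f hf with rfl | rfl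
      · exact absurd rfl hef
      · rw [Sym2.mem_iff] at ha hb
        rcases ha with rfl | rfl <;> rcases hb with rfl | rfl
        · exact ⟨hab, nab⟩
        · exact ⟨haw', naw'⟩
        · exact ⟨hwb, fun h => nbw h.symm⟩
        · exact ⟨hww', nww'⟩
      · rw [Sym2.mem_iff] at ha hb
        rcases ha with rfl | rfl <;> rcases hb with rfl | rfl
        · exact ⟨hab.symm, fun h => nab h.symm⟩
        · exact ⟨hwb.symm, nbw⟩
        · exact ⟨haw'.symm, fun h => naw' h.symm⟩
        · exact ⟨hww'.symm, fun h => nww' h.symm⟩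
      · exact absurd rfl hef
  have hMS : ∀ e ∈ M, ∀ a ∈ e, a ∈ S ∧ G.neighborSet a ⊆ S := by
    intro e he a ha
    rcases hmemM e he with rfl | rfl <;> rw [Sym2.mem_iff] at ha
    · rcases ha with rfl | rfl
      · exact ⟨hBS hxaB, fun y hy => hBS (hNa hy)⟩
      · exact ⟨hBS hwB, fun y hy => hBS (hNw hy)⟩
    · rcases ha with rfl | rfl
      · exact ⟨hBS hxbB, fun y hy => hBS (hNb hy)⟩
      · exact ⟨hBS hw'B, fun y hy => hBS (hNw' hy)⟩
  have hm := master G hG S ⟨u, hBS (Or.inl (Or.inl mem_NB_self))⟩ (cls_spec B) M hMmatch hMS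
  rw [hcard2] at hm
  -- cost of S
  have habs : {z | z ∉ B ∧ G.neighborSet z ⊆ B} ⊆
      Yr ∪ ((⋃ y ∈ Ya, G.neighborSet y \ {xa}) ∪ (⋃ y ∈ Yb, G.neighborSet y \ {xb})) := by
    rintro z ⟨hzB, hzsub⟩
    obtain ⟨y0, hy0⟩ := hniso z
    have hy0B : y0 ∈ B := hzsub hy0
    have hzNB : z ∉ NB ∪ I := fun h => hzB (Or.inl h)
    rcases hy0B with (hNBm | hIm) | (hYam | hYbm)
    · rcases Set.mem_insert_iff.mp hNBm with rfl | hy0Nu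
      · exact absurd (Or.inl (Or.inl (mem_NB_of_nbr (G.adj_symm hy0)))) hzB
      · by_cases hv : y0 = v
        · subst hv
          have : z ∈ G.neighborSet y0 := G.adj_symm hy0
          rw [hNv, Set.mem_singleton_iff] at this
          subst this
          exact absurd (Or.inl (Or.inl mem_NB_self)) hzB
        · by_cases hxa' : y0 = xa
          · subst hxa'
            exact absurd (hNa (G.adj_symm hy0)) hzB
          · by_cases hxb' : y0 = xb
            · subst hxb'
              exact absurd (hNb (G.adj_symm hy0)) hzB
            · left
              refine ⟨?_, hzNB⟩
              refine Set.mem_biUnion ?_ (G.adj_symm hy0 : z ∈ G.neighborSet y0)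
              refine ⟨hy0Nu, ?_⟩
              simp only [Set.mem_insert_iff, Set.mem_singleton_iff]
              push_neg
              exact ⟨hv, hxa', hxb'⟩
    · exact absurd (Or.inl (Or.inl (mem_NB_of_nbr (hIm.2 (G.adj_symm hy0))))) hzB
    · right; left
      refine Set.mem_biUnion hYam ⟨G.adj_symm hy0, ?_⟩
      simp only [Set.mem_singleton_iff]
      exact fun h => hzB (h ▸ hxaB)
    · right; right
      refine Set.mem_biUnion hYbm ⟨G.adj_symm hy0, ?_⟩
      simp only [Set.mem_singleton_iff]
      exact fun h => hzB (h ▸ hxbB)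
  have hUa : (⋃ y ∈ Ya, G.neighborSet y \ {xa}).ncard ≤ 3 * Ya.ncard := by
    apply ncard_biUnion_le
    intro y hy
    have hxay : xa ∈ G.neighborSet y := G.adj_symm hy.1
    have h5 : (G.neighborSet y \ {xa}).ncard = (G.neighborSet y).ncard - 1 :=
      Set.ncard_diff_singleton_of_mem hxay
    have h6 : (G.neighborSet y).ncard ≤ 4 := hdeg4 y
    omega
  have hUb : (⋃ y ∈ Yb, G.neighborSet y \ {xb}).ncard ≤ 3 * Yb.ncard := by
    apply ncard_biUnion_le
    intro y hy
    have hxby : xb ∈ G.neighborSet y := G.adj_symm hy.1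
    have h5 : (G.neighborSet y \ {xb}).ncard = (G.neighborSet y).ncard - 1 :=
      Set.ncard_diff_singleton_of_mem hxby
    have h6 : (G.neighborSet y).ncard ≤ 4 := hdeg4 y
    omega
  have hclsc := cls_ncard_le B _ habs
  have hSS : S.ncard = (clsOf G B).ncard := rfl
  have hBc : B.ncard ≤ (NB.ncard + I.ncard) + (Ya.ncard + Yb.ncard) := by
    calc B.ncard ≤ (NB ∪ I).ncard + (Ya ∪ Yb).ncard := Set.ncard_union_le _ _
    _ ≤ (NB.ncard + I.ncard) + (Ya.ncard + Yb.ncard) := by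
        have g1 := Set.ncard_union_le NB I
        have g2 := Set.ncard_union_le Ya Yb
        omega
  have hAbsc : (Yr ∪ ((⋃ y ∈ Ya, G.neighborSet y \ {xa}) ∪
      (⋃ y ∈ Yb, G.neighborSet y \ {xb}))).ncard ≤
      Yr.ncard + (3 * Ya.ncard + 3 * Yb.ncard) := by
    have g1 := Set.ncard_union_le Yr ((⋃ y ∈ Ya, G.neighborSet y \ {xa}) ∪
      (⋃ y ∈ Yb, G.neighborSet y \ {xb}))
    have g2 := Set.ncard_union_le (⋃ y ∈ Ya, G.neighborSet y \ {xa})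
      (⋃ y ∈ Yb, G.neighborSet y \ {xb})
    omega
  omega

end PairScheme
section TripleScheme
open SimpleGraph Set
variable {V : Type u} [Fintype V] {G : SimpleGraph V} {u v : V}

open Classical in
lemma triple_scheme (hG : MinCounterexample G) (hNv : G.neighborSet v = {u})
    {x1 x2 x3 w1 w2 w3 : V}
    (hx1 : x1 ∈ G.neighborSet u) (hx2 : x2 ∈ G.neighborSet u) (hx3 : x3 ∈ G.neighborSet u)
    (h12 : x1 ≠ x2) (h13 : x1 ≠ x3) (h23 : x2 ≠ x3)
    (n12 : ¬ G.Adj x1 x2) (n13 : ¬ G.Adj x1 x3) (n23 : ¬ G.Adj x2 x3)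
    (hw1 : w1 ∈ Iof G u) (hw2 : w2 ∈ Iof G u) (hw3 : w3 ∈ Iof G u)
    (hw12 : w1 ≠ w2) (hw13 : w1 ≠ w3) (hw23 : w2 ≠ w3)
    (e1 : G.Adj x1 w1) (e2 : G.Adj x2 w2) (e3 : G.Adj x3 w3)
    (m12 : ¬ G.Adj x1 w2) (m13 : ¬ G.Adj x1 w3)
    (m21 : ¬ G.Adj x2 w1) (m23 : ¬ G.Adj x2 w3)
    (m31 : ¬ G.Adj x3 w1) (m32 : ¬ G.Adj x3 w2)
    (hcost : (NBof G u).ncard + (Iof G u).ncard +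
      4 * ((Yof G u x1).ncard + (Yof G u x2).ncard + (Yof G u x3).ncard) +
      ((⋃ x ∈ (G.neighborSet u \ {v, x1, x2, x3}), G.neighborSet x) \
        (NBof G u ∪ Iof G u)).ncard ≤ 27) : False := by
  have hniso : ∀ z, ∃ y, G.Adj z y := hG.2.2.1
  have hdeg4 : ∀ z, deg G z ≤ 4 := hG.2.1
  set NB := NBof G u with hNB
  set I := Iof G u with hI
  set Y1 := Yof G u x1 with hY1
  set Y2 := Yof G u x2 with hY2
  set Y3 := Yof G u x3 with hY3
  set Yr := ((⋃ x ∈ (G.neighborSet u \ {v, x1, x2, x3}), G.neighborSet x) \ (NB ∪ I)) with hYr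
  set B := (NB ∪ I) ∪ (Y1 ∪ Y2 ∪ Y3) with hB
  have hN1 : G.neighborSet x1 ⊆ B := by
    intro y hy
    rcases nbr_sub_base x1 hy with h | h
    · exact Or.inl h
    · exact Or.inr (Or.inl (Or.inl h))
  have hN2 : G.neighborSet x2 ⊆ B := by
    intro y hy
    rcases nbr_sub_base x2 hy with h | h
    · exact Or.inl h
    · exact Or.inr (Or.inl (Or.inr h))
  have hN3 : G.neighborSet x3 ⊆ B := by
    intro y hy
    rcases nbr_sub_base x3 hy with h | h
    · exact Or.inl h
    · exact Or.inr (Or.inr h)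
  have hNwB : ∀ {w : V}, w ∈ I → G.neighborSet w ⊆ B := fun hw y hy =>
    Or.inl (Or.inl (mem_NB_of_nbr (hw.2 hy)))
  set S := clsOf G B with hScls
  have hBS : B ⊆ S := Set.subset_union_left
  have hx1B : x1 ∈ B := Or.inl (Or.inl (mem_NB_of_nbr hx1))
  have hx2B : x2 ∈ B := Or.inl (Or.inl (mem_NB_of_nbr hx2))
  have hx3B : x3 ∈ B := Or.inl (Or.inl (mem_NB_of_nbr hx3))
  have hwiB : ∀ {w : V}, w ∈ I → w ∈ B := fun hw => Or.inl (Or.inr hw)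
  -- distinctness of x's and w's
  have q11 : x1 ≠ w1 := Iof_ne_nbr hw1 hx1
  have q12 : x1 ≠ w2 := Iof_ne_nbr hw2 hx1
  have q13 : x1 ≠ w3 := Iof_ne_nbr hw3 hx1
  have q21 : x2 ≠ w1 := Iof_ne_nbr hw1 hx2
  have q22 : x2 ≠ w2 := Iof_ne_nbr hw2 hx2
  have q23 : x2 ≠ w3 := Iof_ne_nbr hw3 hx2
  have q31 : x3 ≠ w1 := Iof_ne_nbr hw1 hx3
  have q32 : x3 ≠ w2 := Iof_ne_nbr hw2 hx3
  have q33 : x3 ≠ w3 := Iof_ne_nbr hw3 hx3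
  have r12 : ¬ G.Adj w1 w2 := Iof_nonadj hw1 hw2
  have r13 : ¬ G.Adj w1 w3 := Iof_nonadj hw1 hw3
  have r23 : ¬ G.Adj w2 w3 := Iof_nonadj hw2 hw3
  set M : Finset (Sym2 V) := {s(x1, w1), s(x2, w2), s(x3, w3)} with hM
  have hE12 : (s(x1, w1) : Sym2 V) ≠ s(x2, w2) := by
    intro h; rw [Sym2.eq_iff] at h
    rcases h with ⟨rfl, rfl⟩ | ⟨rfl, rfl⟩
    · exact h12 rfl
    · exact q12 rfl
  have hE13 : (s(x1, w1) : Sym2 V) ≠ s(x3, w3) := by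
    intro h; rw [Sym2.eq_iff] at h
    rcases h with ⟨rfl, rfl⟩ | ⟨rfl, rfl⟩
    · exact h13 rfl
    · exact q13 rfl
  have hE23 : (s(x2, w2) : Sym2 V) ≠ s(x3, w3) := by
    intro h; rw [Sym2.eq_iff] at h
    rcases h with ⟨rfl, rfl⟩ | ⟨rfl, rfl⟩
    · exact h23 rfl
    · exact q23 rfl
  have hcard3 : M.card = 3 := by
    rw [hM]
    rw [Finset.card_insert_of_notMem (by simp [hE12, hE13]),
      Finset.card_insert_of_notMem (by simp [hE23]), Finset.card_singleton]
  have hmemM : ∀ e ∈ M, e = s(x1, w1) ∨ e = s(x2, w2) ∨ e = s(x3, w3) := by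
    intro e he
    rcases Finset.mem_insert.mp he with h | h
    · exact Or.inl h
    rcases Finset.mem_insert.mp h with h' | h'
    · exact Or.inr (Or.inl h')
    · exact Or.inr (Or.inr (Finset.mem_singleton.mp h'))
  have key : ∀ (p q r t : V), p ≠ r → p ≠ t → q ≠ r → q ≠ t →
      ¬G.Adj p r → ¬G.Adj p t → ¬G.Adj q r → ¬G.Adj q t →
      ∀ a ∈ (s(p, q) : Sym2 V), ∀ b ∈ (s(r, t) : Sym2 V), a ≠ b ∧ ¬G.Adj a b := by
    intro p q r t d1 d2 d3 d4 n1 n2 n3 n4 a ha b hb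
    rw [Sym2.mem_iff] at ha hb
    rcases ha with rfl | rfl <;> rcases hb with rfl | rfl
    · exact ⟨d1, n1⟩
    · exact ⟨d2, n2⟩
    · exact ⟨d3, n3⟩
    · exact ⟨d4, n4⟩
  have hMmatch : IsInducedMatching G M := by
    constructor
    · intro e he
      rcases hmemM e he with rfl | rfl | rfl
      · exact e1
      · exact e2
      · exact e3
    · intro e he f hf hef a ha b hb
      rcases hmemM e he with rfl | rfl | rfl <;> rcases hmemM f hf with rfl | rfl | rfl
      · exact absurd rfl hef
      · exact key x1 w1 x2 w2 h12 q12 q21.symm hw12 n12 m12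
          (fun h => m21 h.symm) r12 a ha b hb
      · exact key x1 w1 x3 w3 h13 q13 q31.symm hw13 n13 m13
          (fun h => m31 h.symm) r13 a ha b hb
      · exact key x2 w2 x1 w1 h12.symm q21 q12.symm hw12.symm
          (fun h => n12 h.symm) m21 (fun h => m12 h.symm) (fun h => r12 h.symm) a ha b hb
      · exact absurd rfl hef
      · exact key x2 w2 x3 w3 h23 q23 q32.symm hw23 n23 m23
          (fun h => m32 h.symm) r23 a ha b hb
      · exact key x3 w3 x1 w1 h13.symm q31 q13.symm hw13.symm
          (fun h => n13 h.symm) m31 (fun h => m13 h.symm) (fun h => r13 h.symm) a ha b hb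
      · exact key x3 w3 x2 w2 h23.symm q32 q23.symm hw23.symm
          (fun h => n23 h.symm) m32 (fun h => m23 h.symm) (fun h => r23 h.symm) a ha b hb
      · exact absurd rfl hef
  have hMS : ∀ e ∈ M, ∀ a ∈ e, a ∈ S ∧ G.neighborSet a ⊆ S := by
    intro e he a ha
    rcases hmemM e he with rfl | rfl | rfl <;> rw [Sym2.mem_iff] at ha
    · rcases ha with rfl | rfl
      · exact ⟨hBS hx1B, fun y hy => hBS (hN1 hy)⟩
      · exact ⟨hBS (hwiB hw1), fun y hy => hBS (hNwB hw1 hy)⟩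
    · rcases ha with rfl | rfl
      · exact ⟨hBS hx2B, fun y hy => hBS (hN2 hy)⟩
      · exact ⟨hBS (hwiB hw2), fun y hy => hBS (hNwB hw2 hy)⟩
    · rcases ha with rfl | rfl
      · exact ⟨hBS hx3B, fun y hy => hBS (hN3 hy)⟩
      · exact ⟨hBS (hwiB hw3), fun y hy => hBS (hNwB hw3 hy)⟩
  have hm := master G hG S ⟨u, hBS (Or.inl (Or.inl mem_NB_self))⟩ (cls_spec B) M hMmatch hMS
  rw [hcard3] at hm
  have habs : {z | z ∉ B ∧ G.neighborSet z ⊆ B} ⊆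
      Yr ∪ ((⋃ y ∈ Y1, G.neighborSet y \ {x1}) ∪ (⋃ y ∈ Y2, G.neighborSet y \ {x2}) ∪
        (⋃ y ∈ Y3, G.neighborSet y \ {x3})) := by
    rintro z ⟨hzB, hzsub⟩
    obtain ⟨y0, hy0⟩ := hniso z
    have hy0B : y0 ∈ B := hzsub hy0
    have hzNB : z ∉ NB ∪ I := fun h => hzB (Or.inl h)
    rcases hy0B with (hNBm | hIm) | ((hY1m | hY2m) | hY3m)
    · rcases Set.mem_insert_iff.mp hNBm with rfl | hy0Nu
      · exact absurd (Or.inl (Or.inl (mem_NB_of_nbr (G.adj_symm hy0)))) hzB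
      · by_cases hv : y0 = v
        · subst hv
          have hz2 : z ∈ G.neighborSet y0 := G.adj_symm hy0
          rw [hNv, Set.mem_singleton_iff] at hz2
          subst hz2
          exact absurd (Or.inl (Or.inl mem_NB_self)) hzB
        · by_cases hc1 : y0 = x1
          · subst hc1; exact absurd (hN1 (G.adj_symm hy0)) hzB
          · by_cases hc2 : y0 = x2
            · subst hc2; exact absurd (hN2 (G.adj_symm hy0)) hzB
            · by_cases hc3 : y0 = x3
              · subst hc3; exact absurd (hN3 (G.adj_symm hy0)) hzB
              · left
                refine ⟨?_, hzNB⟩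
                refine Set.mem_biUnion ?_ (G.adj_symm hy0 : z ∈ G.neighborSet y0)
                refine ⟨hy0Nu, ?_⟩
                simp only [Set.mem_insert_iff, Set.mem_singleton_iff]
                push_neg
                exact ⟨hv, hc1, hc2, hc3⟩
    · exact absurd (Or.inl (Or.inl (mem_NB_of_nbr (hIm.2 (G.adj_symm hy0))))) hzB
    · right; left; left
      refine Set.mem_biUnion hY1m ⟨G.adj_symm hy0, ?_⟩
      simp only [Set.mem_singleton_iff]
      exact fun h => hzB (h ▸ hx1B)
    · right; left; right
      refine Set.mem_biUnion hY2m ⟨G.adj_symm hy0, ?_⟩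
      simp only [Set.mem_singleton_iff]
      exact fun h => hzB (h ▸ hx2B)
    · right; right
      refine Set.mem_biUnion hY3m ⟨G.adj_symm hy0, ?_⟩
      simp only [Set.mem_singleton_iff]
      exact fun h => hzB (h ▸ hx3B)
  have hUbound : ∀ (x : V) (Y : Set V), (∀ y ∈ Y, x ∈ G.neighborSet y) →
      (⋃ y ∈ Y, G.neighborSet y \ {x}).ncard ≤ 3 * Y.ncard := by
    intro x Y hY
    apply ncard_biUnion_le
    intro y hy
    have h5 : (G.neighborSet y \ {x}).ncard = (G.neighborSet y).ncard - 1 :=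
      Set.ncard_diff_singleton_of_mem (hY y hy)
    have h6 : (G.neighborSet y).ncard ≤ 4 := hdeg4 y
    omega
  have hU1 := hUbound x1 Y1 (fun y hy => G.adj_symm hy.1)
  have hU2 := hUbound x2 Y2 (fun y hy => G.adj_symm hy.1)
  have hU3 := hUbound x3 Y3 (fun y hy => G.adj_symm hy.1)
  have hclsc := cls_ncard_le B _ habs
  have hSS : S.ncard = (clsOf G B).ncard := rfl
  have hBc : B.ncard ≤ (NB.ncard + I.ncard) + (Y1.ncard + Y2.ncard + Y3.ncard) := by
    have g0 : B.ncard ≤ (NB ∪ I).ncard + (Y1 ∪ Y2 ∪ Y3).ncard := Set.ncard_union_le _ _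
    have g1 := Set.ncard_union_le NB I
    have g2 : (Y1 ∪ Y2 ∪ Y3).ncard ≤ (Y1 ∪ Y2).ncard + Y3.ncard := Set.ncard_union_le _ _
    have g3 := Set.ncard_union_le Y1 Y2
    omega
  have hAbsc : (Yr ∪ ((⋃ y ∈ Y1, G.neighborSet y \ {x1}) ∪ (⋃ y ∈ Y2, G.neighborSet y \ {x2}) ∪
      (⋃ y ∈ Y3, G.neighborSet y \ {x3}))).ncard ≤
      Yr.ncard + (3 * Y1.ncard + 3 * Y2.ncard + 3 * Y3.ncard) := by
    have g1 := Set.ncard_union_le Yr ((⋃ y ∈ Y1, G.neighborSet y \ {x1}) ∪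
      (⋃ y ∈ Y2, G.neighborSet y \ {x2}) ∪ (⋃ y ∈ Y3, G.neighborSet y \ {x3}))
    have g2 := Set.ncard_union_le ((⋃ y ∈ Y1, G.neighborSet y \ {x1}) ∪
      (⋃ y ∈ Y2, G.neighborSet y \ {x2})) (⋃ y ∈ Y3, G.neighborSet y \ {x3})
    have g3 := Set.ncard_union_le (⋃ y ∈ Y1, G.neighborSet y \ {x1})
      (⋃ y ∈ Y2, G.neighborSet y \ {x2})
    omega
  omega

end TripleScheme
section Helpers
open SimpleGraph Set
variable {V : Type u} [Fintype V] {G : SimpleGraph V} {u v : V}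

lemma diff_nonempty_of_ncard_lt {A B : Set V} (h : B.ncard < (A ∪ B).ncard) :
    (A \ B).Nonempty := by
  by_contra hne
  rw [Set.not_nonempty_iff_eq_empty, Set.diff_eq_empty] at hne
  rw [Set.union_eq_self_of_subset_left hne] at h
  omega

lemma cap_lemma (hdeg4 : ∀ z, deg G z ≤ 4) (x : V) (hx : x ∈ G.neighborSet u)
    (E : Set V) (hE1 : E ⊆ G.neighborSet x) (hE2 : E ⊆ G.neighborSet u) :
    (Iof G u ∩ G.neighborSet x).ncard + (Yof G u x).ncard + E.ncard ≤ 3 := by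
  set A := Iof G u ∩ G.neighborSet x with hA
  set Y := Yof G u x with hY
  have hAsub : A ⊆ G.neighborSet x \ {u} := by
    rintro z ⟨hzI, hzN⟩
    refine ⟨hzN, ?_⟩
    simp only [Set.mem_singleton_iff]
    rintro rfl
    exact hzI.1 mem_NB_self
  have hYsub : Y ⊆ G.neighborSet x \ {u} := by
    rintro z ⟨hzN, hzB⟩
    refine ⟨hzN, ?_⟩
    simp only [Set.mem_singleton_iff]
    rintro rfl
    exact hzB (Or.inl mem_NB_self)
  have hEsub : E ⊆ G.neighborSet x \ {u} := by
    intro z hz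
    refine ⟨hE1 hz, ?_⟩
    simp only [Set.mem_singleton_iff]
    rintro rfl
    exact G.notMem_neighborSet_self (hE2 hz)
  have hAY : Disjoint A Y := by
    rw [Set.disjoint_left]
    rintro z ⟨hzI, _⟩ ⟨_, hzB⟩
    exact hzB (Or.inr hzI)
  have hAE : Disjoint (A ∪ Y) E := by
    rw [Set.disjoint_left]
    rintro z hz hzE
    rcases hz with ⟨hzI, _⟩ | ⟨_, hzB⟩
    · exact hzI.1 (mem_NB_of_nbr (hE2 hzE))
    · exact hzB (Or.inl (mem_NB_of_nbr (hE2 hzE)))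
  have h1 : (A ∪ Y).ncard = A.ncard + Y.ncard :=
    Set.ncard_union_eq hAY (Set.toFinite _) (Set.toFinite _)
  have h2 : ((A ∪ Y) ∪ E).ncard = (A ∪ Y).ncard + E.ncard :=
    Set.ncard_union_eq hAE (Set.toFinite _) (Set.toFinite _)
  have h3 : ((A ∪ Y) ∪ E) ⊆ G.neighborSet x \ {u} := by
    intro z hz
    rcases hz with (hz | hz) | hz
    · exact hAsub hz
    · exact hYsub hz
    · exact hEsub hz
  have h4 : ((A ∪ Y) ∪ E).ncard ≤ (G.neighborSet x \ {u}).ncard :=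
    Set.ncard_le_ncard h3 (Set.toFinite _)
  have h5 : (G.neighborSet x \ {u}).ncard = (G.neighborSet x).ncard - 1 :=
    Set.ncard_diff_singleton_of_mem (G.adj_symm hx)
  have h6 : (G.neighborSet x).ncard ≤ 4 := hdeg4 x
  omega

open Classical in
lemma single_inter (a x : V) :
    ({a} ∩ G.neighborSet x).ncard = (if G.Adj x a then 1 else 0) := by
  by_cases h : G.Adj x a
  · rw [if_pos h]
    have : ({a} : Set V) ∩ G.neighborSet x = {a} := by
      apply Set.inter_eq_self_of_subset_left
      intro z hz
      rw [Set.mem_singleton_iff] at hz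
      subst hz
      exact h
    rw [this, Set.ncard_singleton]
  · rw [if_neg h]
    have : ({a} : Set V) ∩ G.neighborSet x = ∅ := by
      rw [Set.eq_empty_iff_forall_notMem]
      rintro z ⟨hz1, hz2⟩
      rw [Set.mem_singleton_iff] at hz1
      subst hz1
      exact h hz2
    rw [this, Set.ncard_empty]

lemma I_in_union (hNv : G.neighborSet v = {u}) (hniso : ∀ z, ∃ y, G.Adj z y)
    {w : V} (hw : w ∈ Iof G u) : ∃ x, x ∈ G.neighborSet u \ {v} ∧ w ∈ G.neighborSet x := by
  obtain ⟨y, hy⟩ := hniso w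
  have hyN : y ∈ G.neighborSet u \ {v} := Iof_nbrs hNv hw hy
  exact ⟨y, hyN, G.adj_symm hy⟩

end Helpers
section Main
open SimpleGraph Set

theorem stmt8' {V : Type u} [Fintype V] (G : SimpleGraph V)
    (hG : MinCounterexample G) :
    ∀ v, 2 ≤ deg G v := by
  classical
  intro v
  by_contra hlt
  push_neg at hlt
  have hniso := hG.2.2.1
  have hdeg4 := hG.2.1
  obtain ⟨y, hy⟩ := hniso v
  have hdv : deg G v = (G.neighborSet v).ncard := rfl
  have h1 : (G.neighborSet v).ncard = 1 := by
    have hp : 0 < (G.neighborSet v).ncard :=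
      (Set.ncard_pos (Set.toFinite _)).mpr ⟨y, hy⟩
    omega
  obtain ⟨u, hNv⟩ := Set.ncard_eq_one.mp h1
  have hdu : deg G u = (G.neighborSet u).ncard := rfl
  have hNBc : (NBof G u).ncard = deg G u + 1 := NB_ncard
  have hvNu : v ∈ G.neighborSet u := v_mem_Nu hNv
  set xs := G.neighborSet u \ {v} with hxs
  have hxsc : xs.ncard = (G.neighborSet u).ncard - 1 :=
    Set.ncard_diff_singleton_of_mem hvNu
  by_cases hbase : (NBof G u).ncard + (Iof G u).ncard ≤ 9
  · exact base_scheme hG hNv hbase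
  push_neg at hbase
  have hIsub : Iof G u ⊆ ⋃ x ∈ xs, (G.neighborSet x \ {u}) := by
    intro w hw
    obtain ⟨x, hx1, hx2⟩ := I_in_union hNv hniso hw
    refine Set.mem_biUnion hx1 ⟨hx2, ?_⟩
    simp only [Set.mem_singleton_iff]
    intro h
    exact hw.1 (h ▸ mem_NB_self)
  have hIbound : (Iof G u).ncard ≤ 3 * xs.ncard := by
    refine le_trans (Set.ncard_le_ncard hIsub (Set.toFinite _)) ?_
    apply ncard_biUnion_le
    intro x hx
    have h5 : (G.neighborSet x \ {u}).ncard = (G.neighborSet x).ncard - 1 :=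
      Set.ncard_diff_singleton_of_mem (G.adj_symm hx.1)
    have h6 : (G.neighborSet x).ncard ≤ 4 := hdeg4 x
    omega
  have hd4 : deg G u ≤ 4 := hdeg4 u
  have hd34 : deg G u = 3 ∨ deg G u = 4 := by omega
  rcases hd34 with hd3 | hd4'
  -- ===================== d = 3 =====================
  · have hxs2 : xs.ncard = 2 := by omega
    obtain ⟨x1, x2, hx12, hxseq⟩ := Set.ncard_eq_two.mp hxs2
    have hx1xs : x1 ∈ xs := by rw [hxseq]; exact Or.inl rfl
    have hx2xs : x2 ∈ xs := by rw [hxseq]; exact Or.inr rfl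
    have hx1m : x1 ∈ G.neighborSet u := hx1xs.1
    have hx2m : x2 ∈ G.neighborSet u := hx2xs.1
    set A1 := Iof G u ∩ G.neighborSet x1 with hA1
    set A2 := Iof G u ∩ G.neighborSet x2 with hA2
    have hIA : Iof G u ⊆ A1 ∪ A2 := by
      intro w hw
      obtain ⟨x, hx1', hx2'⟩ := I_in_union hNv hniso hw
      rw [← hxs] at hx1'
      rw [hxseq] at hx1'
      rcases hx1' with rfl | rfl
      · exact Or.inl ⟨hw, hx2'⟩
      · exact Or.inr ⟨hw, hx2'⟩
    have hIun : (Iof G u).ncard ≤ (A1 ∪ A2).ncard :=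
      Set.ncard_le_ncard hIA (Set.toFinite _)
    have hUle : (A1 ∪ A2).ncard ≤ A1.ncard + A2.ncard := Set.ncard_union_le _ _
    have cap1 := cap_lemma hdeg4 x1 hx1m ({x2} ∩ G.neighborSet x1)
      Set.inter_subset_right
      (by rintro z ⟨hz1, _⟩
          rw [Set.mem_singleton_iff] at hz1
          exact hz1 ▸ hx2m)
    have cap2 := cap_lemma hdeg4 x2 hx2m ({x1} ∩ G.neighborSet x2)
      Set.inter_subset_right
      (by rintro z ⟨hz1, _⟩
          rw [Set.mem_singleton_iff] at hz1
          exact hz1 ▸ hx1m)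
    rw [single_inter] at cap1 cap2
    have eA1 : (Iof G u ∩ G.neighborSet x1).ncard = A1.ncard := rfl
    have eA2 : (Iof G u ∩ G.neighborSet x2).ncard = A2.ncard := rfl
    rw [eA1] at cap1
    rw [eA2] at cap2
    have hnadj : ¬ G.Adj x1 x2 := by
      intro hadj
      rw [if_pos hadj] at cap1
      rw [if_pos hadj.symm] at cap2
      omega
    rw [if_neg hnadj] at cap1
    rw [if_neg (fun h => hnadj h.symm)] at cap2
    -- privates
    have hw1 : (A1 \ A2).Nonempty := by
      apply diff_nonempty_of_ncard_lt
      omega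
    have hw2 : (A2 \ A1).Nonempty := by
      apply diff_nonempty_of_ncard_lt
      have hcomm : (A2 ∪ A1).ncard = (A1 ∪ A2).ncard := by rw [Set.union_comm]
      omega
    obtain ⟨w, hwm⟩ := hw1
    obtain ⟨w', hw'm⟩ := hw2
    have hwI : w ∈ Iof G u := hwm.1.1
    have hw'I : w' ∈ Iof G u := hw'm.1.1
    have hww' : w ≠ w' := fun h => hwm.2 (h ▸ hw'm.1)
    have hadj1 : G.Adj x1 w := hwm.1.2
    have hadj2 : G.Adj x2 w' := hw'm.1.2
    have hnaw' : ¬ G.Adj x1 w' := fun h => hw'm.2 ⟨hw'I, h⟩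
    have hnbw : ¬ G.Adj x2 w := fun h => hwm.2 ⟨hwI, h⟩
    -- Yrest is empty
    have hYrest : ((⋃ x ∈ (G.neighborSet u \ {v, x1, x2}), G.neighborSet x) \
        (NBof G u ∪ Iof G u)) = ∅ := by
      rw [Set.eq_empty_iff_forall_notMem]
      rintro z ⟨hz1, _⟩
      rw [Set.mem_iUnion₂] at hz1
      obtain ⟨x, hx, _⟩ := hz1
      have hxxs : x ∈ xs := ⟨hx.1, fun h => hx.2 (by
        rw [Set.mem_singleton_iff] at h
        exact Or.inl h)⟩
      rw [hxseq] at hxxs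
      rcases hxxs with rfl | rfl
      · exact hx.2 (Or.inr (Or.inl rfl))
      · exact hx.2 (Or.inr (Or.inr rfl))
    apply pair_scheme hG hNv hx1m hx2m hx12 hnadj hwI hw'I hww' hadj1 hadj2 hnaw' hnbw
    rw [hYrest, Set.ncard_empty]
    omega
  -- ===================== d = 4 =====================
  · -- d = 4
    have hxs3 : xs.ncard = 3 := by omega
    obtain ⟨x1, x2, x3, h12, h13, h23, hxseq⟩ := Set.ncard_eq_three.mp hxs3
    have hx1xs : x1 ∈ xs := by rw [hxseq]; exact Or.inl rfl
    have hx2xs : x2 ∈ xs := by rw [hxseq]; exact Or.inr (Or.inl rfl)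
    have hx3xs : x3 ∈ xs := by rw [hxseq]; exact Or.inr (Or.inr rfl)
    have hx1m : x1 ∈ G.neighborSet u := hx1xs.1
    have hx2m : x2 ∈ G.neighborSet u := hx2xs.1
    have hx3m : x3 ∈ G.neighborSet u := hx3xs.1
    have capgen : ∀ (xi xj xk : V), xi ∈ G.neighborSet u → xj ∈ G.neighborSet u →
        xk ∈ G.neighborSet u → xj ≠ xk →
        (Iof G u ∩ G.neighborSet xi).ncard + (Yof G u xi).ncard +
          ((if G.Adj xi xj then 1 else 0) + (if G.Adj xi xk then 1 else 0)) ≤ 3 := by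
      intro xi xj xk hi hj hk hjk
      have hEsub1 : ({xj} ∩ G.neighborSet xi) ∪ ({xk} ∩ G.neighborSet xi) ⊆
          G.neighborSet xi :=
        Set.union_subset Set.inter_subset_right Set.inter_subset_right
      have hEsub2 : ({xj} ∩ G.neighborSet xi) ∪ ({xk} ∩ G.neighborSet xi) ⊆
          G.neighborSet u := by
        rintro z (⟨hz1, _⟩ | ⟨hz1, _⟩) <;> rw [Set.mem_singleton_iff] at hz1
        · exact hz1 ▸ hj
        · exact hz1 ▸ hk
      have cap := cap_lemma hdeg4 xi hi _ hEsub1 hEsub2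
      have hdisj : Disjoint ({xj} ∩ G.neighborSet xi) ({xk} ∩ G.neighborSet xi) := by
        rw [Set.disjoint_left]
        rintro z ⟨hz1, _⟩ ⟨hz2, _⟩
        rw [Set.mem_singleton_iff] at hz1 hz2
        exact hjk (hz1 ▸ hz2 ▸ rfl)
      have hE : (({xj} ∩ G.neighborSet xi) ∪ ({xk} ∩ G.neighborSet xi)).ncard =
          ({xj} ∩ G.neighborSet xi).ncard + ({xk} ∩ G.neighborSet xi).ncard :=
        Set.ncard_union_eq hdisj (Set.toFinite _) (Set.toFinite _)
      rw [hE, single_inter, single_inter] at cap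
      omega
    have cap1 := capgen x1 x2 x3 hx1m hx2m hx3m h23
    have cap2 := capgen x2 x1 x3 hx2m hx1m hx3m h13
    have cap3 := capgen x3 x1 x2 hx3m hx1m hx2m h12
    have symm21 : (if G.Adj x2 x1 then 1 else 0) = (if G.Adj x1 x2 then 1 else 0) := by
      by_cases h : G.Adj x1 x2
      · rw [if_pos h, if_pos h.symm]
      · rw [if_neg h, if_neg (fun h' => h h'.symm)]
    have symm31 : (if G.Adj x3 x1 then 1 else 0) = (if G.Adj x1 x3 then 1 else 0) := by
      by_cases h : G.Adj x1 x3
      · rw [if_pos h, if_pos h.symm]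
      · rw [if_neg h, if_neg (fun h' => h h'.symm)]
    have symm32 : (if G.Adj x3 x2 then 1 else 0) = (if G.Adj x2 x3 then 1 else 0) := by
      by_cases h : G.Adj x2 x3
      · rw [if_pos h, if_pos h.symm]
      · rw [if_neg h, if_neg (fun h' => h h'.symm)]
    rw [symm21] at cap2
    rw [symm31, symm32] at cap3
    set b12 : ℕ := if G.Adj x1 x2 then 1 else 0 with hb12def
    set b13 : ℕ := if G.Adj x1 x3 then 1 else 0 with hb13def
    set b23 : ℕ := if G.Adj x2 x3 then 1 else 0 with hb23def
    set A1 := Iof G u ∩ G.neighborSet x1 with hA1def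
    set A2 := Iof G u ∩ G.neighborSet x2 with hA2def
    set A3 := Iof G u ∩ G.neighborSet x3 with hA3def
    set Y1n := (Yof G u x1).ncard with hY1def
    set Y2n := (Yof G u x2).ncard with hY2def
    set Y3n := (Yof G u x3).ncard with hY3def
    set U12 := A1 ∪ A2 with hU12def
    set U13 := A1 ∪ A3 with hU13def
    set U23 := A2 ∪ A3 with hU23def
    set UA := U12 ∪ A3 with hUAdef
    -- monotonicity facts
    have m1 : A1.ncard ≤ U12.ncard := Set.ncard_le_ncard Set.subset_union_left (Set.toFinite _)
    have m2 : A2.ncard ≤ U12.ncard := Set.ncard_le_ncard Set.subset_union_right (Set.toFinite _)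
    have m3 : A1.ncard ≤ U13.ncard := Set.ncard_le_ncard Set.subset_union_left (Set.toFinite _)
    have m4 : A3.ncard ≤ U13.ncard := Set.ncard_le_ncard Set.subset_union_right (Set.toFinite _)
    have m5 : A2.ncard ≤ U23.ncard := Set.ncard_le_ncard Set.subset_union_left (Set.toFinite _)
    have m6 : A3.ncard ≤ U23.ncard := Set.ncard_le_ncard Set.subset_union_right (Set.toFinite _)
    have ule12 : U12.ncard ≤ A1.ncard + A2.ncard := Set.ncard_union_le _ _
    have ule13 : U13.ncard ≤ A1.ncard + A3.ncard := Set.ncard_union_le _ _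
    have ule23 : U23.ncard ≤ A2.ncard + A3.ncard := Set.ncard_union_le _ _
    have s12A : U12 ⊆ UA := Set.subset_union_left
    have s13A : U13 ⊆ UA := by
      rintro z (h | h)
      · exact Or.inl (Or.inl h)
      · exact Or.inr h
    have s23A : U23 ⊆ UA := by
      rintro z (h | h)
      · exact Or.inl (Or.inr h)
      · exact Or.inr h
    have mA1 : U12.ncard ≤ UA.ncard := Set.ncard_le_ncard s12A (Set.toFinite _)
    have mA2 : U13.ncard ≤ UA.ncard := Set.ncard_le_ncard s13A (Set.toFinite _)
    have mA3 : U23.ncard ≤ UA.ncard := Set.ncard_le_ncard s23A (Set.toFinite _)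
    have uA12 : UA.ncard ≤ U12.ncard + A3.ncard := Set.ncard_union_le _ _
    have uA13 : UA.ncard ≤ U13.ncard + A2.ncard := by
      refine le_trans (Set.ncard_le_ncard ?_ (Set.toFinite _)) (Set.ncard_union_le U13 A2)
      rintro z ((h | h) | h)
      · exact Or.inl (Or.inl h)
      · exact Or.inr h
      · exact Or.inl (Or.inr h)
    have uA23 : UA.ncard ≤ U23.ncard + A1.ncard := by
      refine le_trans (Set.ncard_le_ncard ?_ (Set.toFinite _)) (Set.ncard_union_le U23 A1)
      rintro z ((h | h) | h)
      · exact Or.inr h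
      · exact Or.inl (Or.inl h)
      · exact Or.inl (Or.inr h)
    -- submodularity
    have su1 : UA.ncard + A1.ncard ≤ U12.ncard + U13.ncard := by
      have e := Set.ncard_union_add_ncard_inter U12 U13 (Set.toFinite _) (Set.toFinite _)
      have s1 : UA ⊆ U12 ∪ U13 := by
        rintro z ((h | h) | h)
        · exact Or.inl (Or.inl h)
        · exact Or.inl (Or.inr h)
        · exact Or.inr (Or.inr h)
      have s2 : A1 ⊆ U12 ∩ U13 := fun z hz => ⟨Or.inl hz, Or.inl hz⟩
      have n1 : UA.ncard ≤ (U12 ∪ U13).ncard := Set.ncard_le_ncard s1 (Set.toFinite _)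
      have n2 : A1.ncard ≤ (U12 ∩ U13).ncard := Set.ncard_le_ncard s2 (Set.toFinite _)
      omega
    have su2 : UA.ncard + A2.ncard ≤ U12.ncard + U23.ncard := by
      have e := Set.ncard_union_add_ncard_inter U12 U23 (Set.toFinite _) (Set.toFinite _)
      have s1 : UA ⊆ U12 ∪ U23 := by
        rintro z ((h | h) | h)
        · exact Or.inl (Or.inl h)
        · exact Or.inl (Or.inr h)
        · exact Or.inr (Or.inr h)
      have s2 : A2 ⊆ U12 ∩ U23 := fun z hz => ⟨Or.inr hz, Or.inl hz⟩
      have n1 : UA.ncard ≤ (U12 ∪ U23).ncard := Set.ncard_le_ncard s1 (Set.toFinite _)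
      have n2 : A2.ncard ≤ (U12 ∩ U23).ncard := Set.ncard_le_ncard s2 (Set.toFinite _)
      omega
    have su3 : UA.ncard + A3.ncard ≤ U13.ncard + U23.ncard := by
      have e := Set.ncard_union_add_ncard_inter U13 U23 (Set.toFinite _) (Set.toFinite _)
      have s1 : UA ⊆ U13 ∪ U23 := by
        rintro z ((h | h) | h)
        · exact Or.inl (Or.inl h)
        · exact Or.inr (Or.inl h)
        · exact Or.inl (Or.inr h)
      have s2 : A3 ⊆ U13 ∩ U23 := fun z hz => ⟨Or.inr hz, Or.inr hz⟩
      have n1 : UA.ncard ≤ (U13 ∪ U23).ncard := Set.ncard_le_ncard s1 (Set.toFinite _)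
      have n2 : A3.ncard ≤ (U13 ∩ U23).ncard := Set.ncard_le_ncard s2 (Set.toFinite _)
      omega
    have hIA : Iof G u ⊆ UA := by
      intro w hw
      obtain ⟨x, hx1', hx2'⟩ := I_in_union hNv hniso hw
      rw [← hxs] at hx1'
      rw [hxseq] at hx1'
      rcases hx1' with rfl | rfl | rfl
      · exact Or.inl (Or.inl ⟨hw, hx2'⟩)
      · exact Or.inl (Or.inr ⟨hw, hx2'⟩)
      · exact Or.inr ⟨hw, hx2'⟩
    have hIle : (Iof G u).ncard ≤ UA.ncard := Set.ncard_le_ncard hIA (Set.toFinite _)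
    -- the numeric selection
    have hsel :
        (b12 = 0 ∧ b13 = 0 ∧ b23 = 0 ∧ U23.ncard < UA.ncard ∧ U13.ncard < UA.ncard ∧
          U12.ncard < UA.ncard ∧
          5 + (Iof G u).ncard + 4 * (Y1n + Y2n + Y3n) ≤ 27) ∨
        (b12 = 0 ∧ A1.ncard < U12.ncard ∧ A2.ncard < U12.ncard ∧
          5 + (Iof G u).ncard + 4 * (Y1n + Y2n) + Y3n ≤ 18) ∨
        (b13 = 0 ∧ A1.ncard < U13.ncard ∧ A3.ncard < U13.ncard ∧
          5 + (Iof G u).ncard + 4 * (Y1n + Y3n) + Y2n ≤ 18) ∨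
        (b23 = 0 ∧ A2.ncard < U23.ncard ∧ A3.ncard < U23.ncard ∧
          5 + (Iof G u).ncard + 4 * (Y2n + Y3n) + Y1n ≤ 18) := by
      omega
    -- helper that finishes off a valid pair
    have pairdone : ∀ p q r : V, p ∈ G.neighborSet u → q ∈ G.neighborSet u →
        p ≠ q → ¬ G.Adj p q →
        ((G.neighborSet u \ {v, p, q}) ⊆ ({r} : Set V)) →
        ((Iof G u ∩ G.neighborSet q).ncard <
          ((Iof G u ∩ G.neighborSet p) ∪ (Iof G u ∩ G.neighborSet q)).ncard) →
        ((Iof G u ∩ G.neighborSet p).ncard <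
          ((Iof G u ∩ G.neighborSet p) ∪ (Iof G u ∩ G.neighborSet q)).ncard) →
        ((NBof G u).ncard + (Iof G u).ncard +
          4 * ((Yof G u p).ncard + (Yof G u q).ncard) + (Yof G u r).ncard ≤ 18) →
        False := by
      intro p q r hp hq hpq hnadj hsub hlt1 hlt2 hcost
      obtain ⟨w, hwm⟩ := diff_nonempty_of_ncard_lt hlt1
      have hlt2' : (Iof G u ∩ G.neighborSet p).ncard <
          ((Iof G u ∩ G.neighborSet q) ∪ (Iof G u ∩ G.neighborSet p)).ncard := by
        have hcomm : ((Iof G u ∩ G.neighborSet q) ∪ (Iof G u ∩ G.neighborSet p)).ncard =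
            ((Iof G u ∩ G.neighborSet p) ∪ (Iof G u ∩ G.neighborSet q)).ncard := by
          rw [Set.union_comm]
        omega
      obtain ⟨w', hw'm⟩ := diff_nonempty_of_ncard_lt hlt2'
      have hwI : w ∈ Iof G u := hwm.1.1
      have hw'I : w' ∈ Iof G u := hw'm.1.1
      have hww' : w ≠ w' := fun h => hwm.2 (h ▸ hw'm.1)
      have hadj1 : G.Adj p w := hwm.1.2
      have hadj2 : G.Adj q w' := hw'm.1.2
      have hnaw' : ¬ G.Adj p w' := fun h => hw'm.2 ⟨hw'I, h⟩
      have hnbw : ¬ G.Adj q w := fun h => hwm.2 ⟨hwI, h⟩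
      have hYr : ((⋃ x ∈ (G.neighborSet u \ {v, p, q}), G.neighborSet x) \ (NBof G u ∪ Iof G u)) ⊆ Yof G u r := by
        rintro z ⟨hz1, hz2⟩
        rw [Set.mem_iUnion₂] at hz1
        obtain ⟨x, hx, hzx⟩ := hz1
        have hxr : x = r := hsub hx
        exact ⟨hxr ▸ hzx, hz2⟩
      have hYrc : ((⋃ x ∈ (G.neighborSet u \ {v, p, q}), G.neighborSet x) \ (NBof G u ∪ Iof G u)).ncard ≤ (Yof G u r).ncard :=
        Set.ncard_le_ncard hYr (Set.toFinite _)
      apply pair_scheme hG hNv hp hq hpq hnadj hwI hw'I hww' hadj1 hadj2 hnaw' hnbw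
      omega
    have hb0 : ∀ {a b : V}, ((if G.Adj a b then 1 else 0) = (0:ℕ)) → ¬ G.Adj a b := by
      intro a b h hadj
      rw [if_pos hadj] at h
      omega
    rcases hsel with ⟨hb1, hb2, hb3, hp1, hp2, hp3, hc⟩ | ⟨hb, hp, hq, hc⟩ |
      ⟨hb, hp, hq, hc⟩ | ⟨hb, hp, hq, hc⟩
    · -- triple
      have n12 : ¬ G.Adj x1 x2 := hb0 (hb12def ▸ hb1)
      have n13 : ¬ G.Adj x1 x3 := hb0 (hb13def ▸ hb2)
      have n23 : ¬ G.Adj x2 x3 := hb0 (hb23def ▸ hb3)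
      have hP1 : (A1 \ U23).Nonempty := by
        apply diff_nonempty_of_ncard_lt
        have he : (A1 ∪ U23).ncard = UA.ncard := by
          rw [hUAdef, hU12def, hU23def, Set.union_assoc]
        omega
      have hP2 : (A2 \ U13).Nonempty := by
        apply diff_nonempty_of_ncard_lt
        have he : (A2 ∪ U13).ncard = UA.ncard := by
          rw [hUAdef, hU12def, hU13def, Set.union_assoc, Set.union_left_comm]
        omega
      have hP3 : (A3 \ U12).Nonempty := by
        apply diff_nonempty_of_ncard_lt
        have he : (A3 ∪ U12).ncard = UA.ncard := by
          rw [hUAdef, Set.union_comm]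
        omega
      obtain ⟨w1, hw1m⟩ := hP1
      obtain ⟨w2, hw2m⟩ := hP2
      obtain ⟨w3, hw3m⟩ := hP3
      have hw1I : w1 ∈ Iof G u := hw1m.1.1
      have hw2I : w2 ∈ Iof G u := hw2m.1.1
      have hw3I : w3 ∈ Iof G u := hw3m.1.1
      have hw12 : w1 ≠ w2 := fun h => hw1m.2 (Or.inl (h ▸ hw2m.1))
      have hw13 : w1 ≠ w3 := fun h => hw1m.2 (Or.inr (h ▸ hw3m.1))
      have hw23 : w2 ≠ w3 := fun h => hw2m.2 (Or.inr (h ▸ hw3m.1))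
      have e1 : G.Adj x1 w1 := hw1m.1.2
      have e2 : G.Adj x2 w2 := hw2m.1.2
      have e3 : G.Adj x3 w3 := hw3m.1.2
      have m12 : ¬ G.Adj x1 w2 := fun h => hw2m.2 (Or.inl ⟨hw2I, h⟩)
      have m13 : ¬ G.Adj x1 w3 := fun h => hw3m.2 (Or.inl ⟨hw3I, h⟩)
      have m21 : ¬ G.Adj x2 w1 := fun h => hw1m.2 (Or.inl ⟨hw1I, h⟩)
      have m23 : ¬ G.Adj x2 w3 := fun h => hw3m.2 (Or.inr ⟨hw3I, h⟩)
      have m31 : ¬ G.Adj x3 w1 := fun h => hw1m.2 (Or.inr ⟨hw1I, h⟩)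
      have m32 : ¬ G.Adj x3 w2 := fun h => hw2m.2 (Or.inr ⟨hw2I, h⟩)
      have hYrest : ((⋃ x ∈ (G.neighborSet u \ {v, x1, x2, x3}), G.neighborSet x) \ (NBof G u ∪ Iof G u)) = ∅ := by
        rw [Set.eq_empty_iff_forall_notMem]
        rintro z ⟨hz1, _⟩
        rw [Set.mem_iUnion₂] at hz1
        obtain ⟨x, hx, _⟩ := hz1
        have hxxs : x ∈ xs := ⟨hx.1, fun h => hx.2 (by
          rw [Set.mem_singleton_iff] at h
          exact Or.inl h)⟩
        rw [hxseq] at hxxs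
        rcases hxxs with rfl | rfl | rfl
        · exact hx.2 (Or.inr (Or.inl rfl))
        · exact hx.2 (Or.inr (Or.inr (Or.inl rfl)))
        · exact hx.2 (Or.inr (Or.inr (Or.inr rfl)))
      apply triple_scheme hG hNv hx1m hx2m hx3m h12 h13 h23 n12 n13 n23
        hw1I hw2I hw3I hw12 hw13 hw23 e1 e2 e3 m12 m13 m21 m23 m31 m32
      rw [hYrest, Set.ncard_empty]
      omega
    · -- pair (1,2)
      have n12 : ¬ G.Adj x1 x2 := hb0 (hb12def ▸ hb)
      refine pairdone x1 x2 x3 hx1m hx2m h12 n12 ?_ ?_ ?_ ?_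
      · intro x hx
        have hxxs : x ∈ xs := ⟨hx.1, fun h => hx.2 (by
          rw [Set.mem_singleton_iff] at h
          exact Or.inl h)⟩
        rw [hxseq] at hxxs
        rcases hxxs with rfl | rfl | rfl
        · exact absurd (Or.inr (Or.inl rfl)) hx.2
        · exact absurd (Or.inr (Or.inr rfl)) hx.2
        · rfl
      · exact hq
      · exact hp
      · omega
    · -- pair (1,3)
      have n13 : ¬ G.Adj x1 x3 := hb0 (hb13def ▸ hb)
      refine pairdone x1 x3 x2 hx1m hx3m h13 n13 ?_ ?_ ?_ ?_
      · intro x hx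
        have hxxs : x ∈ xs := ⟨hx.1, fun h => hx.2 (by
          rw [Set.mem_singleton_iff] at h
          exact Or.inl h)⟩
        rw [hxseq] at hxxs
        rcases hxxs with rfl | rfl | rfl
        · exact absurd (Or.inr (Or.inl rfl)) hx.2
        · rfl
        · exact absurd (Or.inr (Or.inr rfl)) hx.2
      · exact hq
      · exact hp
      · omega
    · -- pair (2,3)
      have n23 : ¬ G.Adj x2 x3 := hb0 (hb23def ▸ hb)
      refine pairdone x2 x3 x1 hx2m hx3m h23 n23 ?_ ?_ ?_ ?_
      · intro x hx
        have hxxs : x ∈ xs := ⟨hx.1, fun h => hx.2 (by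
          rw [Set.mem_singleton_iff] at h
          exact Or.inl h)⟩
        rw [hxseq] at hxxs
        rcases hxxs with rfl | rfl | rfl
        · rfl
        · exact absurd (Or.inr (Or.inl rfl)) hx.2
        · exact absurd (Or.inr (Or.inr rfl)) hx.2
      · exact hq
      · exact hp
      · omega

end Main

/-- A minimum counterexample has minimum degree at least 2. -/
theorem stmt8 {V : Type u} [Fintype V] (G : SimpleGraph V)
    (hG : MinCounterexample G) :
    ∀ v, 2 ≤ deg G v := by
  exact stmt8' G hG
end
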